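/- arXiv:2401.07101 — 2 statements merged into one kernel-verified Lean document; each statement's English description precedes it below -/
import Mathlib

section
/- Let G be the group of order p^{2r+1}·2^n described in the context, let H be the subgroup generated by P and b, and let K be a subgroup of H with K normal in H, K ≠ H, K ≠ P, and H/K cyclic. Then the normalizer N_G(K) equals the subgroup generated by P, b, and a^{2^{n−2}}, and (H,K) is a strong Shoda pair of G. -/
open scoped Classical

namespace Paper

variable {G : Type*} [Group G] [Fintype G]

noncomputable instance : Fintype (Subgroup G) :=
  Fintype.ofInjective (fun H : Subgroup G => (H : Set G)) SetLike.coe_injective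

/-- `M̂ = (1/|M|) ∑_{m ∈ M} m` in the rational group algebra `ℚ[G]`. -/
noncomputable def hat (M : Subgroup G) : MonoidAlgebra ℚ G :=
  (Nat.card M : ℚ)⁻¹ • ∑ m : M, MonoidAlgebra.of ℚ G (m : G)

/-- `L` is a normal subgroup of `H` properly containing `K`. -/
def NormalOver (H K L : Subgroup G) : Prop :=
  L ≤ H ∧ K < L ∧ ∀ h ∈ H, ∀ g ∈ L, h⁻¹ * g * h ∈ L

/-- `L` is minimal among the normal subgroups of `H` properly containing `K`. -/
def MinimalOver (H K L : Subgroup G) : Prop :=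
  NormalOver H K L ∧ ∀ L' : Subgroup G, NormalOver H K L' → L' ≤ L → L' = L

/-- `ε(H,K) = K̂` if `H = K`, and otherwise `∏_L (K̂ - L̂)`, the product running over
the normal subgroups `L` of `H` minimal with respect to properly containing `K`
(all such factors commute pairwise, so the product is order-independent). -/
noncomputable def eps (H K : Subgroup G) : MonoidAlgebra ℚ G :=
  if H = K then hat K
  else (({L : Subgroup G | MinimalOver H K L}.toFinset).toList.map
    fun L => hat K - hat L).prod

/-- The subgroup `[H,g] = ⟨g⁻¹h⁻¹gh : h ∈ H⟩`. -/
def commSub (H : Subgroup G) (g : G) : Subgroup G :=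
  Subgroup.closure {c : G | ∃ h ∈ H, c = g⁻¹ * h⁻¹ * g * h}

/-- The quotient `H/K` is cyclic (elementwise formulation: some `h ∈ H` is such that
every `g ∈ H` lies in a coset `h^m K`). -/
def CyclicQuot (H K : Subgroup G) : Prop :=
  ∃ h ∈ H, ∀ g ∈ H, ∃ m : ℤ, (h ^ m)⁻¹ * g ∈ K

/-- `K` is normal in `H` (elementwise formulation). -/
def NormalIn (H K : Subgroup G) : Prop :=
  ∀ h ∈ H, ∀ g ∈ K, h⁻¹ * g * h ∈ K

/-- `(H,K)` is a Shoda pair of `G`. -/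
def IsShodaPair (H K : Subgroup G) : Prop :=
  K ≤ H ∧ NormalIn H K ∧ CyclicQuot H K ∧
    ∀ g : G, commSub H g ⊓ H ≤ K → g ∈ H

/-- `(H,K)` is a strong Shoda pair of `G`: conditions (SS1), (SS2), (SS3).
Maximal abelianness of `H/K` in `N_G(K)/K` is phrased via the Galois correspondence
between subgroups of `N_G(K)/K` and subgroups of `G` lying between `K` and `N_G(K)`. -/
def IsStrongShodaPair (H K : Subgroup G) : Prop :=
  -- (SS1): `H` is a normal subgroup of `N_G(K)`
  (H ≤ Subgroup.normalizer (K : Set G) ∧ ∀ g ∈ Subgroup.normalizer (K : Set G), ∀ h ∈ H, g⁻¹ * h * g ∈ H) ∧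
  -- (SS2): `H/K` is cyclic and a maximal abelian subgroup of `N_G(K)/K`
  (CyclicQuot H K ∧
    (∀ h₁ ∈ H, ∀ h₂ ∈ H, h₁⁻¹ * h₂⁻¹ * h₁ * h₂ ∈ K) ∧
    ∀ C : Subgroup G, K ≤ C → C ≤ Subgroup.normalizer (K : Set G) →
      (∀ c₁ ∈ C, ∀ c₂ ∈ C, c₁⁻¹ * c₂⁻¹ * c₁ * c₂ ∈ K) → H ≤ C → C = H) ∧
  -- (SS3): `ε(H,K)·(g⁻¹ ε(H,K) g) = 0` for `g ∉ N_G(K)`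
  (∀ g : G, g ∉ Subgroup.normalizer (K : Set G) →
    eps H K * (MonoidAlgebra.of ℚ G g⁻¹ * eps H K * MonoidAlgebra.of ℚ G g) = 0)


/-- The data of the group `G = P ⋊ D_{2^n}` of order `p^{2r+1}·2^n`: an odd prime
`p ≡ 1 (mod 4)`, `r ≥ 1`, `n ≥ 3` with `2^{n-1}` the exact power of `2` dividing
`p - 1`, an integer `k` of multiplicative order `2^{n-1}` modulo `p` with inverse `q`
modulo `p`, and generators `x, y₁, …, y_r, z₁, …, z_r, a, b` of `G` subject to the
listed relations (commutator convention `[u,v] = u⁻¹v⁻¹uv`). -/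
structure GData (G : Type*) [Group G] [Fintype G] where
  p : ℕ
  r : ℕ
  n : ℕ
  k : ℕ
  q : ℕ
  x : G
  y : Fin r → G
  z : Fin r → G
  a : G
  b : G
  hp : p.Prime
  hp4 : p % 4 = 1
  hr : 1 ≤ r
  hn : 3 ≤ n
  hdvd : 2 ^ (n - 1) ∣ p - 1
  hndvd : ¬ 2 ^ n ∣ p - 1
  hordk : orderOf ((k : ZMod p)) = 2 ^ (n - 1)
  hkq : ((k : ZMod p)) * (q : ZMod p) = 1
  hcard : Fintype.card G = p ^ (2 * r + 1) * 2 ^ n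
  hgen : Subgroup.closure (({x, a, b} : Set G) ∪ Set.range y ∪ Set.range z) = ⊤
  hxp : x ^ p = 1
  hyp : ∀ i, y i ^ p = 1
  hzp : ∀ i, z i ^ p = 1
  han : a ^ 2 ^ (n - 1) = 1
  hb2 : b ^ 2 = 1
  hxy : ∀ i, x⁻¹ * (y i)⁻¹ * x * y i = 1
  hxz : ∀ i, x⁻¹ * (z i)⁻¹ * x * z i = 1
  hyy : ∀ i j, (y i)⁻¹ * (y j)⁻¹ * y i * y j = 1
  hzz : ∀ i j, (z i)⁻¹ * (z j)⁻¹ * z i * z j = 1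
  hyz : ∀ i, (y i)⁻¹ * (z i)⁻¹ * y i * z i = x
  hyz' : ∀ i j, i ≠ j → (y i)⁻¹ * (z j)⁻¹ * y i * z j = 1
  hax : a⁻¹ * x⁻¹ * a * x = 1
  hay : ∀ i, a⁻¹ * (y i)⁻¹ * a * y i = (y i) ^ (1 - (k : ℤ))
  haz : ∀ i, a⁻¹ * (z i)⁻¹ * a * z i = (z i) ^ (1 - (q : ℤ))
  hbx : b⁻¹ * x⁻¹ * b * x = x ^ 2
  hby : ∀ i, b⁻¹ * (y i)⁻¹ * b * y i = z i * y i
  hbz : ∀ i, b⁻¹ * (z i)⁻¹ * b * z i = y i * z i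
  hba : b⁻¹ * a⁻¹ * b * a = a ^ 2

variable {G : Type*} [Group G] [Fintype G]

/-- The subgroup `P = ⟨x, y₁, …, y_r, z₁, …, z_r⟩` of `G`. -/
def GData.P (d : GData G) : Subgroup G :=
  Subgroup.closure (({d.x} : Set G) ∪ Set.range d.y ∪ Set.range d.z)


set_option linter.unusedSectionVars false

namespace S11

variable (d : GData G)

lemma commute_of_comm {u v : G} (h : u⁻¹ * v⁻¹ * u * v = 1) : Commute u v := by
  have h2 : u * v = v * u * (u⁻¹ * v⁻¹ * u * v) := by group
  rw [h, mul_one] at h2; exact h2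

lemma comm_xy (i : Fin d.r) : Commute d.x (d.y i) := commute_of_comm (d.hxy i)
lemma comm_xz (i : Fin d.r) : Commute d.x (d.z i) := commute_of_comm (d.hxz i)
lemma comm_yy (i j : Fin d.r) : Commute (d.y i) (d.y j) := commute_of_comm (d.hyy i j)
lemma comm_zz (i j : Fin d.r) : Commute (d.z i) (d.z j) := commute_of_comm (d.hzz i j)
lemma comm_yz' {i j : Fin d.r} (h : i ≠ j) : Commute (d.y i) (d.z j) := commute_of_comm (d.hyz' i j h)
lemma comm_ax : Commute d.a d.x := commute_of_comm d.hax

/-- `b⁻¹ = b`. -/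
lemma b_inv : d.b⁻¹ = d.b := by
  have h := d.hb2
  rw [pow_two] at h
  exact inv_eq_of_mul_eq_one_right h

/-- generic: from `u⁻¹ * v⁻¹ * u * v = w` infer `u⁻¹ * v * u = (w * v⁻¹)⁻¹`. -/
lemma conj_of_comm {u v w : G} (h : u⁻¹ * v⁻¹ * u * v = w) :
    u⁻¹ * v * u = (w * v⁻¹)⁻¹ := by
  have h1 : u⁻¹ * v⁻¹ * u = (u⁻¹ * v⁻¹ * u * v) * v⁻¹ := by group
  rw [h] at h1
  rw [← h1]; group

lemma conj_y_a (i : Fin d.r) : d.a⁻¹ * d.y i * d.a = d.y i ^ d.k := by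
  have h := conj_of_comm (d.hay i)
  rw [h]
  rw [← zpow_neg_one (d.y i), ← zpow_add, ← zpow_neg, ← zpow_natCast (d.y i) d.k]
  congr 1; ring

lemma conj_z_a (i : Fin d.r) : d.a⁻¹ * d.z i * d.a = d.z i ^ d.q := by
  have h := conj_of_comm (d.haz i)
  rw [h]
  rw [← zpow_neg_one (d.z i), ← zpow_add, ← zpow_neg, ← zpow_natCast (d.z i) d.q]
  congr 1; ring

lemma conj_y_b (i : Fin d.r) : d.b⁻¹ * d.y i * d.b = (d.z i)⁻¹ := by
  have h := conj_of_comm (d.hby i)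
  rw [h]; group

lemma conj_z_b (i : Fin d.r) : d.b⁻¹ * d.z i * d.b = (d.y i)⁻¹ := by
  have h := conj_of_comm (d.hbz i)
  rw [h]; group

lemma conj_x_b : d.b⁻¹ * d.x * d.b = d.x⁻¹ := by
  have h := conj_of_comm d.hbx
  rw [h]; group

lemma conj_a_b : d.b⁻¹ * d.a * d.b = d.a⁻¹ := by
  have h := conj_of_comm d.hba
  rw [h]; group

/-- conjugation of a `zpow` -/
lemma conj_zpow' (c g : G) (m : ℤ) : c⁻¹ * g ^ m * c = (c⁻¹ * g * c) ^ m := by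
  have := @conj_zpow G _ m c⁻¹ g
  rw [inv_inv] at this
  exact this.symm

lemma conj_pow' (c g : G) (m : ℕ) : c⁻¹ * g ^ m * c = (c⁻¹ * g * c) ^ m := by
  have := @conj_pow G _ m c⁻¹ g
  rw [inv_inv] at this
  exact this.symm

lemma conj_y_apow (i : Fin d.r) (j : ℕ) (s : ℤ) :
    (d.a ^ j)⁻¹ * (d.y i) ^ s * d.a ^ j = d.y i ^ (s * (d.k : ℤ) ^ j) := by
  induction j generalizing s with
  | zero => simp
  | succ j ih =>
    have h1 : d.a ^ (j+1) = d.a ^ j * d.a := by rw [pow_succ]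
    rw [h1, mul_inv_rev]
    have h2 : d.a⁻¹ * ((d.a ^ j)⁻¹ * d.y i ^ s * d.a ^ j) * d.a
        = d.a⁻¹ * (d.a ^ j)⁻¹ * d.y i ^ s * (d.a ^ j * d.a) := by group
    rw [← h2, ih]
    rw [conj_zpow', conj_y_a]
    rw [← zpow_natCast (d.y i) d.k, ← zpow_mul]
    congr 1; rw [pow_succ]; ring

lemma conj_z_apow (i : Fin d.r) (j : ℕ) (s : ℤ) :
    (d.a ^ j)⁻¹ * (d.z i) ^ s * d.a ^ j = d.z i ^ (s * (d.q : ℤ) ^ j) := by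
  induction j generalizing s with
  | zero => simp
  | succ j ih =>
    have h1 : d.a ^ (j+1) = d.a ^ j * d.a := by rw [pow_succ]
    rw [h1, mul_inv_rev]
    have h2 : d.a⁻¹ * ((d.a ^ j)⁻¹ * d.z i ^ s * d.a ^ j) * d.a
        = d.a⁻¹ * (d.a ^ j)⁻¹ * d.z i ^ s * (d.a ^ j * d.a) := by group
    rw [← h2, ih]
    rw [conj_zpow', conj_z_a]
    rw [← zpow_natCast (d.z i) d.q, ← zpow_mul]
    congr 1; rw [pow_succ]; ring

/-- generic conjugation lemma in a class-2 situation -/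
lemma conj_gen {u v w : G} (hc2 : Commute w v)
    (hbase : v⁻¹ * u * v = u * w) (c : ℤ) : (v ^ c)⁻¹ * u * v ^ c = u * w ^ c := by
  induction c using Int.induction_on with
  | zero => simp
  | succ m ih =>
    have h1 : v ^ ((m:ℤ)+1) = v ^ (m:ℤ) * v := by rw [zpow_add_one]
    rw [h1, mul_inv_rev]
    have h2 : v⁻¹ * ((v ^ (m:ℤ))⁻¹ * u * v ^ (m:ℤ)) * v
        = v⁻¹ * (v ^ (m:ℤ))⁻¹ * u * (v ^ (m:ℤ) * v) := by group
    rw [← h2, ih]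
    have h3 : v⁻¹ * (u * w ^ (m:ℤ)) * v = (v⁻¹ * u * v) * (v⁻¹ * w ^ (m:ℤ) * v) := by group
    rw [h3, hbase]
    have h4 : v⁻¹ * w ^ (m:ℤ) * v = w ^ (m:ℤ) := by
      have := (hc2.zpow_left (m:ℤ)).eq
      calc v⁻¹ * w ^ (m:ℤ) * v = v⁻¹ * (w ^ (m:ℤ) * v) := by group
        _ = v⁻¹ * (v * w ^ (m:ℤ)) := by rw [← this]
        _ = w ^ (m:ℤ) := by group
    rw [h4, zpow_add_one]; group
  | pred m ih =>
    have h1 : v ^ (-(m:ℤ)-1) = v ^ (-(m:ℤ)) * v⁻¹ := by rw [zpow_sub_one]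
    rw [h1, mul_inv_rev, inv_inv]
    have h2 : v * ((v ^ (-(m:ℤ)))⁻¹ * u * v ^ (-(m:ℤ))) * v⁻¹
        = v * (v ^ (-(m:ℤ)))⁻¹ * u * (v ^ (-(m:ℤ)) * v⁻¹) := by group
    rw [← h2, ih]
    have hbase' : v * u * v⁻¹ = u * w⁻¹ := by
      have : v * (v⁻¹ * u * v) * v⁻¹ = v * (u * w) * v⁻¹ := by rw [hbase]
      have h5 : u = v * (u * w) * v⁻¹ := by
        calc u = v * (v⁻¹ * u * v) * v⁻¹ := by group
          _ = v * (u * w) * v⁻¹ := this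
      calc v * u * v⁻¹ = (v * (u * w) * v⁻¹) * (v * w⁻¹ * v⁻¹) := by group
        _ = u * (v * w⁻¹ * v⁻¹) := by rw [← h5]
        _ = u * w⁻¹ := by
            congr 1
            have := (hc2.inv_left).eq
            calc v * w⁻¹ * v⁻¹ = (v * w⁻¹) * v⁻¹ := by group
              _ = (w⁻¹ * v) * v⁻¹ := by rw [← this]
              _ = w⁻¹ := by group
    have h3 : v * (u * w ^ (-(m:ℤ))) * v⁻¹ = (v * u * v⁻¹) * (v * w ^ (-(m:ℤ)) * v⁻¹) := by group
    rw [h3, hbase']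
    have h4 : v * w ^ (-(m:ℤ)) * v⁻¹ = w ^ (-(m:ℤ)) := by
      have := (hc2.zpow_left (-(m:ℤ))).eq.symm
      calc v * w ^ (-(m:ℤ)) * v⁻¹ = (w ^ (-(m:ℤ)) * v) * v⁻¹ := by rw [this]
        _ = w ^ (-(m:ℤ)) := by group
    rw [h4]
    have : w⁻¹ * w ^ (-(m:ℤ)) = w ^ (-(m:ℤ)-1) := by
      rw [← zpow_neg_one, ← zpow_add]; congr 1; ring
    rw [mul_assoc, this]

lemma conj_gen_pow {u v w : G} (hc1 : Commute w u) (hc2 : Commute w v)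
    (hbase : v⁻¹ * u * v = u * w) (s c : ℤ) :
    (v ^ c)⁻¹ * u ^ s * v ^ c = u ^ s * w ^ (s * c) := by
  rw [conj_zpow', conj_gen hc2 hbase]
  rw [(hc1.symm.zpow_right c).mul_zpow, ← zpow_mul]
  congr 1; ring

/-- `z⁻¹ * y * z = y * x` -/
lemma zyz (i : Fin d.r) : (d.z i)⁻¹ * d.y i * d.z i = d.y i * d.x := by
  have h := d.hyz i
  calc (d.z i)⁻¹ * d.y i * d.z i
      = d.y i * ((d.y i)⁻¹ * (d.z i)⁻¹ * d.y i * d.z i) := by group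
    _ = d.y i * d.x := by rw [h]

/-- `y⁻¹ * z * y = z * x⁻¹` -/
lemma yzy (i : Fin d.r) : (d.y i)⁻¹ * d.z i * d.y i = d.z i * d.x⁻¹ := by
  have h := zyz d i
  have h1 : d.y i * d.z i = d.z i * (d.y i * d.x) := by
    calc d.y i * d.z i = d.z i * ((d.z i)⁻¹ * d.y i * d.z i) := by group
      _ = d.z i * (d.y i * d.x) := by rw [h]
  have h2 : d.z i * d.y i = d.y i * d.z i * d.x⁻¹ := by rw [h1]; group
  calc (d.y i)⁻¹ * d.z i * d.y i = (d.y i)⁻¹ * (d.z i * d.y i) := by group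
    _ = (d.y i)⁻¹ * (d.y i * d.z i * d.x⁻¹) := by rw [h2]
    _ = d.z i * d.x⁻¹ := by group

/-- `(z^c)⁻¹ * y^s * z^c = y^s * x^(s*c)` -/
lemma conj_ypow_zpow (i : Fin d.r) (s c : ℤ) :
    (d.z i ^ c)⁻¹ * d.y i ^ s * d.z i ^ c = d.y i ^ s * d.x ^ (s * c) :=
  conj_gen_pow (comm_xy d i) (comm_xz d i) (zyz d i) s c

/-- `(y^c)⁻¹ * z^s * y^c = z^s * x^(-(s*c))` -/
lemma conj_zpow_ypow (i : Fin d.r) (s c : ℤ) :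
    (d.y i ^ c)⁻¹ * d.z i ^ s * d.y i ^ c = d.z i ^ s * d.x ^ (-(s * c)) := by
  have h := conj_gen_pow (u := d.z i) (v := d.y i) (w := d.x⁻¹)
    ((comm_xz d i).inv_left) ((comm_xy d i).inv_left) (yzy d i) s c
  rw [h, inv_zpow, ← zpow_neg]

/-- swap: `y^s * z^c = z^c * y^s * x^(s*c)` -/
lemma swap_yz (i : Fin d.r) (s c : ℤ) :
    d.y i ^ s * d.z i ^ c = d.z i ^ c * (d.y i ^ s * d.x ^ (s * c)) := by
  rw [← conj_ypow_zpow d i s c]; group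

/-- `(z*y)^c = z^c * y^c * x^e` for some `e`. -/
lemma zy_pow (i : Fin d.r) (c : ℤ) :
    ∃ e : ℤ, (d.z i * d.y i) ^ c = d.z i ^ c * d.y i ^ c * d.x ^ e := by
  induction c using Int.induction_on with
  | zero => exact ⟨0, by simp⟩
  | succ m ih =>
    obtain ⟨e, he⟩ := ih
    refine ⟨e + (m:ℤ), ?_⟩
    rw [zpow_add_one, he]
    have h1 : d.y i ^ (m:ℤ) * d.z i = d.z i * (d.y i ^ (m:ℤ) * d.x ^ ((m:ℤ))) := by
      have := swap_yz d i (m:ℤ) 1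
      simpa using this
    have hxz := ((comm_xz d i).zpow_left e).eq
    have hxy := ((comm_xy d i).zpow_left e).eq
    calc d.z i ^ (m:ℤ) * d.y i ^ (m:ℤ) * d.x ^ e * (d.z i * d.y i)
        = d.z i ^ (m:ℤ) * d.y i ^ (m:ℤ) * (d.x ^ e * d.z i) * d.y i := by group
      _ = d.z i ^ (m:ℤ) * d.y i ^ (m:ℤ) * (d.z i * d.x ^ e) * d.y i := by rw [hxz]
      _ = d.z i ^ (m:ℤ) * (d.y i ^ (m:ℤ) * d.z i) * (d.x ^ e * d.y i) := by group
      _ = d.z i ^ (m:ℤ) * (d.z i * (d.y i ^ (m:ℤ) * d.x ^ (m:ℤ))) * (d.y i * d.x ^ e) := by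
          rw [h1, hxy]
      _ = d.z i ^ ((m:ℤ)+1) * d.y i ^ (m:ℤ) * (d.x ^ (m:ℤ) * d.y i) * d.x ^ e := by
          rw [zpow_add_one]; group
      _ = d.z i ^ ((m:ℤ)+1) * d.y i ^ (m:ℤ) * (d.y i * d.x ^ (m:ℤ)) * d.x ^ e := by
          rw [((comm_xy d i).zpow_left (m:ℤ)).eq]
      _ = d.z i ^ ((m:ℤ)+1) * (d.y i ^ (m:ℤ) * d.y i) * (d.x ^ (m:ℤ) * d.x ^ e) := by group
      _ = d.z i ^ ((m:ℤ)+1) * d.y i ^ ((m:ℤ)+1) * d.x ^ (e + (m:ℤ)) := by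
          rw [← zpow_add_one, ← zpow_add]; congr 2; all_goals ring
  | pred m ih =>
    obtain ⟨e, he⟩ := ih
    refine ⟨e + ((m:ℤ)+1), ?_⟩
    rw [zpow_sub_one, he]
    have hinv : (d.z i * d.y i)⁻¹ = d.y i ^ (-1:ℤ) * d.z i ^ (-1:ℤ) := by group
    rw [hinv]
    have h1 : d.x ^ e * d.y i ^ (-1:ℤ) = d.y i ^ (-1:ℤ) * d.x ^ e :=
      (((comm_xy d i).zpow_right (-1:ℤ)).zpow_left e).eq
    have h2 : d.y i ^ (-(m:ℤ)) * d.y i ^ (-1:ℤ) = d.y i ^ (-(m:ℤ)-1) := by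
      rw [← zpow_add]; ring_nf
    have h3 : d.y i ^ (-(m:ℤ)-1) * d.z i ^ (-1:ℤ)
        = d.z i ^ (-1:ℤ) * (d.y i ^ (-(m:ℤ)-1) * d.x ^ ((-(m:ℤ)-1) * (-1))) :=
      swap_yz d i (-(m:ℤ)-1) (-1)
    calc d.z i ^ (-(m:ℤ)) * d.y i ^ (-(m:ℤ)) * d.x ^ e * (d.y i ^ (-1:ℤ) * d.z i ^ (-1:ℤ))
        = d.z i ^ (-(m:ℤ)) * d.y i ^ (-(m:ℤ)) * (d.x ^ e * d.y i ^ (-1:ℤ)) * d.z i ^ (-1:ℤ) := by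
          group
      _ = d.z i ^ (-(m:ℤ)) * (d.y i ^ (-(m:ℤ)) * d.y i ^ (-1:ℤ)) * (d.x ^ e * d.z i ^ (-1:ℤ)) := by
          rw [h1]; group
      _ = d.z i ^ (-(m:ℤ)) * d.y i ^ (-(m:ℤ)-1) * (d.z i ^ (-1:ℤ) * d.x ^ e) := by
          rw [h2, (((comm_xz d i).zpow_right (-1:ℤ)).zpow_left e).eq]
      _ = d.z i ^ (-(m:ℤ)) * (d.y i ^ (-(m:ℤ)-1) * d.z i ^ (-1:ℤ)) * d.x ^ e := by group
      _ = d.z i ^ (-(m:ℤ)) * (d.z i ^ (-1:ℤ) * (d.y i ^ (-(m:ℤ)-1) * d.x ^ ((-(m:ℤ)-1) * (-1)))) * d.x ^ e := by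
          rw [h3]
      _ = (d.z i ^ (-(m:ℤ)) * d.z i ^ (-1:ℤ)) * d.y i ^ (-(m:ℤ)-1) * (d.x ^ ((-(m:ℤ)-1) * (-1)) * d.x ^ e) := by
          group
      _ = d.z i ^ (-(m:ℤ)-1) * d.y i ^ (-(m:ℤ)-1) * d.x ^ (e + ((m:ℤ)+1)) := by
          rw [← zpow_add, ← zpow_add]
          congr 2
          all_goals ring

/-! ### number-theoretic facts -/

lemma p_ne_two : d.p ≠ 2 := by
  intro h
  have := d.hp4
  rw [h] at this
  norm_num at this

lemma p_pos : 0 < d.p := d.hp.pos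

lemma two_ne_zero_zmod : (2 : ZMod d.p) ≠ 0 := by
  haveI : Fact d.p.Prime := ⟨d.hp⟩
  have h2 : ¬ (d.p ∣ 2) := by
    intro h
    rcases (Nat.Prime.eq_one_or_self_of_dvd Nat.prime_two d.p h) with h1 | h1
    · exact d.hp.one_lt.ne' h1
    · exact p_ne_two d h1
  intro h
  have : ((2:ℕ) : ZMod d.p) = 0 := by exact_mod_cast h
  exact h2 ((ZMod.natCast_eq_zero_iff 2 d.p).mp this)

lemma n_sub_arith : 2 ^ (d.n - 2) * 2 = 2 ^ (d.n - 1) := by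
  have hn := d.hn
  have h : d.n - 1 = (d.n - 2) + 1 := by omega
  rw [h, pow_succ]

lemma k_ne_zero_zmod : (d.k : ZMod d.p) ≠ 0 := by
  haveI : Fact d.p.Prime := ⟨d.hp⟩
  intro h
  have := d.hkq
  rw [h, zero_mul] at this
  exact one_ne_zero this.symm

lemma k_pow_half : ((d.k : ZMod d.p)) ^ (2 ^ (d.n - 2)) = -1 := by
  haveI : Fact d.p.Prime := ⟨d.hp⟩
  set u := ((d.k : ZMod d.p)) ^ (2 ^ (d.n - 2)) with hu
  have h1 : u * u = 1 := by
    rw [hu, ← pow_add]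
    have : 2 ^ (d.n - 2) + 2 ^ (d.n - 2) = 2 ^ (d.n - 1) := by
      rw [← n_sub_arith d]; ring
    rw [this, ← d.hordk]
    exact pow_orderOf_eq_one _
  rcases mul_self_eq_one_iff.mp h1 with h | h
  · exfalso
    have hdvd : orderOf ((d.k : ZMod d.p)) ∣ 2 ^ (d.n - 2) := orderOf_dvd_of_pow_eq_one h
    rw [d.hordk] at hdvd
    have hlt : (2:ℕ) ^ (d.n - 2) < 2 ^ (d.n - 1) := by
      apply Nat.pow_lt_pow_right (by norm_num)
      have := d.hn; omega
    exact absurd (Nat.le_of_dvd (pow_pos (by norm_num) _) hdvd) (not_le.mpr hlt)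
  · exact h

lemma q_eq_k_inv : (d.q : ZMod d.p) = ((d.k : ZMod d.p))⁻¹ := by
  haveI : Fact d.p.Prime := ⟨d.hp⟩
  have h := inv_eq_of_mul_eq_one_right d.hkq
  exact h.symm

lemma q_pow_half : ((d.q : ZMod d.p)) ^ (2 ^ (d.n - 2)) = -1 := by
  haveI : Fact d.p.Prime := ⟨d.hp⟩
  rw [q_eq_k_inv, inv_pow, k_pow_half]
  rw [inv_neg, inv_one]

lemma kj_qj_of_dvd {j : ℕ} (h : 2 ^ (d.n - 2) ∣ j) :
    ((d.k : ZMod d.p)) ^ j = ((d.q : ZMod d.p)) ^ j := by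
  obtain ⟨m, rfl⟩ := h
  rw [pow_mul, pow_mul, k_pow_half, q_pow_half]

lemma dvd_of_kj_qj {j : ℕ} (h : ((d.k : ZMod d.p)) ^ j = ((d.q : ZMod d.p)) ^ j) :
    2 ^ (d.n - 2) ∣ j := by
  haveI : Fact d.p.Prime := ⟨d.hp⟩
  have h1 : ((d.k : ZMod d.p)) ^ j * ((d.k : ZMod d.p)) ^ j = 1 := by
    nth_rewrite 2 [h]
    rw [← mul_pow, d.hkq, one_pow]
  rw [← pow_add] at h1
  have h2 : orderOf ((d.k : ZMod d.p)) ∣ j + j := orderOf_dvd_of_pow_eq_one h1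
  rw [d.hordk] at h2
  have h3 : 2 ^ (d.n - 2) * 2 ∣ j * 2 := by
    rw [n_sub_arith d]
    have hjj : j * 2 = j + j := by ring
    rw [hjj]; exact h2
  exact (Nat.mul_dvd_mul_iff_right (by norm_num : 0 < 2)).mp h3

/-! ### power normalization -/

/-- If `g^p = 1` and `m ≡ m' mod p` then `g^m = g^m'` (integer powers). -/
lemma zpow_congr {g : G} {N : ℕ} (hg : g ^ N = 1) {m m' : ℤ}
    (h : (N:ℤ) ∣ m - m') : g ^ m = g ^ m' := by
  obtain ⟨t, ht⟩ := h
  have hm : m = m' + (N:ℤ) * t := by omega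
  rw [hm, zpow_add, zpow_mul, zpow_natCast, hg, one_zpow, mul_one]

lemma zpow_congr_zmod {g : G} (hg : g ^ d.p = 1) {m m' : ℤ}
    (h : ((m : ZMod d.p)) = ((m' : ZMod d.p))) : g ^ m = g ^ m' := by
  apply zpow_congr hg
  have : ((m - m' : ℤ) : ZMod d.p) = 0 := by push_cast; rw [h]; ring
  exact_mod_cast (ZMod.intCast_zmod_eq_zero_iff_dvd _ _).mp this

/-- If `g^p = 1`, `g^m ∈ K` and `m` invertible mod `p`, then `g ∈ K`. -/
lemma mem_of_zpow_mem {K : Subgroup G} {g : G} (hg : g ^ d.p = 1) {m : ℤ}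
    (hmem : g ^ m ∈ K) (hm : ((m : ZMod d.p)) ≠ 0) : g ∈ K := by
  haveI : Fact d.p.Prime := ⟨d.hp⟩
  set c : ZMod d.p := ((m : ZMod d.p))⁻¹ with hc
  have h1 : ((m : ZMod d.p)) * c = 1 := mul_inv_cancel₀ hm
  have h2 : g ^ (m * (c.val : ℤ)) = g := by
    have : ((m * (c.val : ℤ) : ℤ) : ZMod d.p) = ((1 : ℤ) : ZMod d.p) := by
      push_cast
      rw [ZMod.natCast_val, ZMod.cast_id, h1]
    rw [zpow_congr_zmod d hg this, zpow_one]
  rw [← h2, zpow_mul]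
  exact zpow_mem hmem _

/-! ### a, b, t facts -/

lemma Mpos : 0 < 2 ^ (d.n - 1) := pow_pos (by norm_num) _

lemma a_inv_eq : d.a⁻¹ = d.a ^ (2 ^ (d.n - 1) - 1) := by
  apply inv_eq_of_mul_eq_one_right
  rw [← pow_succ']
  have h : 2 ^ (d.n - 1) - 1 + 1 = 2 ^ (d.n - 1) := by have := Mpos d; omega
  rw [h]; exact d.han

lemma apow_inv_eq (m : ℕ) : (d.a ^ m)⁻¹ = d.a ^ (2 ^ (d.n - 1) * m - m) := by
  apply inv_eq_of_mul_eq_one_right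
  rw [← pow_add]
  have h : m + (2 ^ (d.n - 1) * m - m) = 2 ^ (d.n - 1) * m := by
    have : m ≤ 2 ^ (d.n - 1) * m := Nat.le_mul_of_pos_left m (Mpos d)
    omega
  rw [h, pow_mul, d.han, one_pow]

lemma t_sq : (d.a ^ 2 ^ (d.n - 2)) ^ 2 = 1 := by
  rw [← pow_mul, n_sub_arith d]; exact d.han

lemma t_inv : (d.a ^ 2 ^ (d.n - 2))⁻¹ = d.a ^ 2 ^ (d.n - 2) := by
  apply inv_eq_of_mul_eq_one_right
  have := t_sq d
  rwa [pow_two] at this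

lemma conj_apow_b (j : ℕ) : d.b⁻¹ * d.a ^ j * d.b = (d.a ^ j)⁻¹ := by
  rw [conj_pow' d.b d.a j, conj_a_b, inv_pow]

lemma tb_comm : Commute (d.a ^ 2 ^ (d.n - 2)) d.b := by
  have h := conj_apow_b d (2 ^ (d.n - 2))
  rw [t_inv] at h
  show d.a ^ 2 ^ (d.n - 2) * d.b = d.b * d.a ^ 2 ^ (d.n - 2)
  calc d.a ^ 2 ^ (d.n - 2) * d.b = d.b * (d.b⁻¹ * d.a ^ 2 ^ (d.n - 2) * d.b) := by group
    _ = d.b * d.a ^ 2 ^ (d.n - 2) := by rw [h]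

lemma ba_swap (j : ℕ) : d.b * d.a ^ j = (d.a ^ j)⁻¹ * d.b := by
  have h := conj_apow_b d j
  calc d.b * d.a ^ j = d.b⁻¹ * d.a ^ j := by rw [b_inv]
    _ = (d.b⁻¹ * d.a ^ j * d.b) * d.b⁻¹ := by group
    _ = (d.a ^ j)⁻¹ * d.b⁻¹ := by rw [h]
    _ = (d.a ^ j)⁻¹ * d.b := by rw [b_inv]

/-- `t⁻¹ y^s t = y^(-s)` -/
lemma conj_ypow_t (i : Fin d.r) (s : ℤ) :
    (d.a ^ 2 ^ (d.n - 2))⁻¹ * d.y i ^ s * d.a ^ 2 ^ (d.n - 2) = d.y i ^ (-s) := by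
  rw [conj_y_apow d i (2 ^ (d.n - 2)) s]
  apply zpow_congr_zmod d (d.hyp i)
  push_cast
  rw [k_pow_half d]
  ring

lemma conj_zpow_t (i : Fin d.r) (s : ℤ) :
    (d.a ^ 2 ^ (d.n - 2))⁻¹ * d.z i ^ s * d.a ^ 2 ^ (d.n - 2) = d.z i ^ (-s) := by
  rw [conj_z_apow d i (2 ^ (d.n - 2)) s]
  apply zpow_congr_zmod d (d.hzp i)
  push_cast
  rw [q_pow_half d]
  ring

/-! ### P basics -/

lemma x_mem_P : d.x ∈ d.P :=
  Subgroup.subset_closure (by left; left; rfl)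

lemma y_mem_P (i : Fin d.r) : d.y i ∈ d.P :=
  Subgroup.subset_closure (by left; right; exact ⟨i, rfl⟩)

lemma z_mem_P (i : Fin d.r) : d.z i ∈ d.P :=
  Subgroup.subset_closure (by right; exact ⟨i, rfl⟩)

lemma conj_mem_of_gens {S : Set G} {c : G}
    (h : ∀ s ∈ S, c⁻¹ * s * c ∈ Subgroup.closure S) :
    ∀ u ∈ Subgroup.closure S, c⁻¹ * u * c ∈ Subgroup.closure S := by
  intro u hu
  induction hu using Subgroup.closure_induction with
  | mem s hs => exact h s hs
  | one => simpa using one_mem _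
  | mul u v hu hv ihu ihv =>
    have huv : c⁻¹ * (u * v) * c = (c⁻¹ * u * c) * (c⁻¹ * v * c) := by group
    rw [huv]; exact mul_mem ihu ihv
  | inv u hu ih =>
    have hi : c⁻¹ * u⁻¹ * c = (c⁻¹ * u * c)⁻¹ := by group
    rw [hi]; exact inv_mem ih

lemma conj_apow_P (j : ℕ) : ∀ u ∈ d.P, (d.a ^ j)⁻¹ * u * d.a ^ j ∈ d.P := by
  apply conj_mem_of_gens
  rintro s ((rfl | ⟨i, rfl⟩) | ⟨i, rfl⟩)
  · have hc : Commute (d.a ^ j) d.x := (comm_ax d).pow_left j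
    have : (d.a ^ j)⁻¹ * d.x * d.a ^ j = d.x := by
      calc (d.a ^ j)⁻¹ * d.x * d.a ^ j = (d.a ^ j)⁻¹ * (d.x * d.a ^ j) := by group
        _ = (d.a ^ j)⁻¹ * (d.a ^ j * d.x) := by rw [← hc.eq]
        _ = d.x := by group
    rw [this]; exact x_mem_P d
  · have h := conj_y_apow d i j 1
    rw [zpow_one] at h
    rw [h]; exact zpow_mem (y_mem_P d i) _
  · have h := conj_z_apow d i j 1
    rw [zpow_one] at h
    rw [h]; exact zpow_mem (z_mem_P d i) _

lemma conj_b_P : ∀ u ∈ d.P, d.b⁻¹ * u * d.b ∈ d.P := by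
  apply conj_mem_of_gens
  rintro s ((rfl | ⟨i, rfl⟩) | ⟨i, rfl⟩)
  · rw [conj_x_b]; exact inv_mem (x_mem_P d)
  · rw [conj_y_b]; exact inv_mem (z_mem_P d i)
  · rw [conj_z_b]; exact inv_mem (y_mem_P d i)

lemma P_normal : d.P.Normal := by
  rw [← Subgroup.normalizer_eq_top_iff]
  rw [eq_top_iff, ← d.hgen, Subgroup.closure_le]
  rintro s (((rfl | rfl | rfl) | ⟨i, rfl⟩) | ⟨i, rfl⟩)
  · exact Subgroup.le_normalizer (x_mem_P d)
  · -- a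
    show d.a ∈ Subgroup.normalizer (d.P : Set G)
    rw [Subgroup.mem_normalizer_iff]
    intro h
    constructor
    · intro hh
      have h1 : d.a * h * d.a⁻¹ = (d.a ^ (2^(d.n-1)-1))⁻¹ * h * d.a ^ (2^(d.n-1)-1) := by
        rw [← a_inv_eq d]; group
      rw [h1]; exact conj_apow_P d _ h hh
    · intro hh
      have h1 : h = d.a⁻¹ * (d.a * h * d.a⁻¹) * d.a := by group
      rw [h1]
      have := conj_apow_P d 1 _ hh
      rwa [pow_one] at this
  · -- b
    show d.b ∈ Subgroup.normalizer (d.P : Set G)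
    rw [Subgroup.mem_normalizer_iff]
    intro h
    constructor
    · intro hh
      have h1 : d.b * h * d.b⁻¹ = d.b⁻¹ * h * d.b := by rw [b_inv]
      rw [h1]; exact conj_b_P d _ hh
    · intro hh
      have h1 : h = d.b⁻¹ * (d.b * h * d.b⁻¹) * d.b := by group
      rw [h1]; exact conj_b_P d _ hh
  · exact Subgroup.le_normalizer (y_mem_P d i)
  · exact Subgroup.le_normalizer (z_mem_P d i)

/-! ### normal forms (existence) -/

lemma b_pow_reduce (e : ℕ) : d.b ^ e = d.b ^ (e % 2) := by
  conv_lhs => rw [← Nat.div_add_mod e 2]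
  rw [pow_add, pow_mul, d.hb2, one_pow, one_mul]

lemma t_pow_reduce (f : ℕ) : (d.a ^ 2 ^ (d.n - 2)) ^ f = (d.a ^ 2 ^ (d.n - 2)) ^ (f % 2) := by
  conv_lhs => rw [← Nat.div_add_mod f 2]
  rw [pow_add, pow_mul, t_sq d, one_pow, one_mul]

lemma D_mul (j e j' e' : ℕ) :
    ∃ j'' e'' : ℕ, e'' < 2 ∧ d.a ^ j * d.b ^ e * (d.a ^ j' * d.b ^ e') = d.a ^ j'' * d.b ^ e'' := by
  rcases Nat.even_or_odd e with he | he
  · -- b^e = 1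
    have hbe : d.b ^ e = 1 := by
      obtain ⟨m, rfl⟩ := he
      rw [← two_mul, pow_mul, d.hb2, one_pow]
    refine ⟨j + j', e' % 2, Nat.mod_lt _ (by norm_num), ?_⟩
    rw [hbe, ← b_pow_reduce, pow_add]; group
  · -- b^e = b
    have hbe : d.b ^ e = d.b := by
      obtain ⟨m, rfl⟩ := he
      rw [pow_add, pow_mul, d.hb2, one_pow, pow_one, one_mul]
    refine ⟨j + (2 ^ (d.n - 1) * j' - j'), (1 + e') % 2, Nat.mod_lt _ (by norm_num), ?_⟩
    rw [hbe]
    have h1 : d.b * (d.a ^ j' * d.b ^ e') = (d.a ^ j')⁻¹ * d.b ^ (1 + e') := by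
      rw [pow_add, pow_one]
      calc d.b * (d.a ^ j' * d.b ^ e') = (d.b * d.a ^ j') * d.b ^ e' := by group
        _ = ((d.a ^ j')⁻¹ * d.b) * d.b ^ e' := by rw [ba_swap]
        _ = (d.a ^ j')⁻¹ * (d.b * d.b ^ e') := by group
    calc d.a ^ j * d.b * (d.a ^ j' * d.b ^ e')
        = d.a ^ j * (d.b * (d.a ^ j' * d.b ^ e')) := by group
      _ = d.a ^ j * ((d.a ^ j')⁻¹ * d.b ^ (1 + e')) := by rw [h1]
      _ = d.a ^ j * (d.a ^ (2 ^ (d.n - 1) * j' - j') * d.b ^ (1 + e')) := by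
          rw [← apow_inv_eq]
      _ = d.a ^ (j + (2 ^ (d.n - 1) * j' - j')) * d.b ^ ((1 + e') % 2) := by
          rw [pow_add, ← b_pow_reduce]; group

/-- every element of `G` has the form `u * a^j * b^e` with `u ∈ P`. -/
lemma nfG (g : G) : ∃ u ∈ d.P, ∃ j e : ℕ, e < 2 ∧ g = u * d.a ^ j * d.b ^ e := by
  haveI hPn := P_normal d
  let S : Subgroup G :=
    { carrier := {g | ∃ u ∈ d.P, ∃ j e : ℕ, e < 2 ∧ g = u * d.a ^ j * d.b ^ e}
      one_mem' := ⟨1, one_mem _, 0, 0, by norm_num, by simp⟩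
      mul_mem' := by
        rintro g₁ g₂ ⟨u, hu, j, e, he, rfl⟩ ⟨u', hu', j', e', he', rfl⟩
        obtain ⟨j'', e'', he'', hD⟩ := D_mul d j e j' e'
        refine ⟨u * ((d.a ^ j * d.b ^ e) * u' * (d.a ^ j * d.b ^ e)⁻¹),
          mul_mem hu (hPn.conj_mem u' hu' _), j'', e'', he'', ?_⟩
        calc u * d.a ^ j * d.b ^ e * (u' * d.a ^ j' * d.b ^ e')
            = u * ((d.a ^ j * d.b ^ e) * u' * (d.a ^ j * d.b ^ e)⁻¹) *
              (d.a ^ j * d.b ^ e * (d.a ^ j' * d.b ^ e')) := by group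
          _ = u * ((d.a ^ j * d.b ^ e) * u' * (d.a ^ j * d.b ^ e)⁻¹) *
              (d.a ^ j'' * d.b ^ e'') := by rw [hD]
          _ = u * ((d.a ^ j * d.b ^ e) * u' * (d.a ^ j * d.b ^ e)⁻¹) *
              d.a ^ j'' * d.b ^ e'' := by group
      inv_mem' := by
        rintro g ⟨u, hu, j, e, he, rfl⟩
        obtain ⟨j'', e'', he'', hD⟩ := D_mul d 0 e (2 ^ (d.n - 1) * j - j) 0
        have hbinv : (d.b ^ e)⁻¹ = d.b ^ e := by
          interval_cases e
          · simp
          · rw [pow_one]; exact b_inv d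
        have hw : (d.b ^ e * d.a ^ (2 ^ (d.n - 1) * j - j)) * u⁻¹ *
            (d.b ^ e * d.a ^ (2 ^ (d.n - 1) * j - j))⁻¹ ∈ d.P := hPn.conj_mem _ (inv_mem hu) _
        refine ⟨_, hw, j'', e'', he'', ?_⟩
        have h2 : d.b ^ e * d.a ^ (2 ^ (d.n - 1) * j - j) = d.a ^ j'' * d.b ^ e'' := by
          rw [← hD]; group
        calc (u * d.a ^ j * d.b ^ e)⁻¹
            = (d.b ^ e)⁻¹ * (d.a ^ j)⁻¹ * u⁻¹ := by group
          _ = d.b ^ e * d.a ^ (2 ^ (d.n - 1) * j - j) * u⁻¹ := by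
              rw [hbinv, apow_inv_eq]
          _ = ((d.b ^ e * d.a ^ (2 ^ (d.n - 1) * j - j)) * u⁻¹ *
                (d.b ^ e * d.a ^ (2 ^ (d.n - 1) * j - j))⁻¹) *
              (d.b ^ e * d.a ^ (2 ^ (d.n - 1) * j - j)) := by group
          _ = ((d.b ^ e * d.a ^ (2 ^ (d.n - 1) * j - j)) * u⁻¹ *
                (d.b ^ e * d.a ^ (2 ^ (d.n - 1) * j - j))⁻¹) * (d.a ^ j'' * d.b ^ e'') := by
              rw [h2]
          _ = ((d.b ^ e * d.a ^ (2 ^ (d.n - 1) * j - j)) * u⁻¹ *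
                (d.b ^ e * d.a ^ (2 ^ (d.n - 1) * j - j))⁻¹) * d.a ^ j'' * d.b ^ e'' := by
              group }
  have hle : (⊤ : Subgroup G) ≤ S := by
    rw [← d.hgen, Subgroup.closure_le]
    rintro s (((rfl | rfl | rfl) | ⟨i, rfl⟩) | ⟨i, rfl⟩)
    · exact ⟨d.x, x_mem_P d, 0, 0, by norm_num, by simp⟩
    · exact ⟨1, one_mem _, 1, 0, by norm_num, by simp⟩
    · exact ⟨1, one_mem _, 0, 1, by norm_num, by simp⟩
    · exact ⟨d.y i, y_mem_P d i, 0, 0, by norm_num, by simp⟩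
    · exact ⟨d.z i, z_mem_P d i, 0, 0, by norm_num, by simp⟩
  exact hle (Subgroup.mem_top g)

/-- every element of `H = P ⊔ ⟨b⟩` has the form `u * b^e`. -/
lemma nfH {g : G} (hg : g ∈ d.P ⊔ Subgroup.closure {d.b}) :
    ∃ u ∈ d.P, ∃ e : ℕ, e < 2 ∧ g = u * d.b ^ e := by
  haveI hPn := P_normal d
  let S : Subgroup G :=
    { carrier := {g | ∃ u ∈ d.P, ∃ e : ℕ, e < 2 ∧ g = u * d.b ^ e}
      one_mem' := ⟨1, one_mem _, 0, by norm_num, by simp⟩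
      mul_mem' := by
        rintro g₁ g₂ ⟨u, hu, e, he, rfl⟩ ⟨u', hu', e', he', rfl⟩
        refine ⟨u * (d.b ^ e * u' * (d.b ^ e)⁻¹), mul_mem hu (hPn.conj_mem u' hu' _),
          (e + e') % 2, Nat.mod_lt _ (by norm_num), ?_⟩
        rw [← b_pow_reduce, pow_add]; group
      inv_mem' := by
        rintro g ⟨u, hu, e, he, rfl⟩
        interval_cases e
        · exact ⟨u⁻¹, inv_mem hu, 0, by norm_num, by simp⟩
        · refine ⟨d.b * u⁻¹ * d.b⁻¹, hPn.conj_mem _ (inv_mem hu) _, 1, by norm_num, ?_⟩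
          rw [pow_one]
          have h1 : d.b * u⁻¹ * d.b⁻¹ * d.b = d.b * u⁻¹ := by group
          calc (u * d.b)⁻¹ = d.b⁻¹ * u⁻¹ := by group
            _ = d.b * u⁻¹ := congrArg (fun w => w * u⁻¹) (b_inv d)
            _ = d.b * u⁻¹ * d.b⁻¹ * d.b := h1.symm }
  have hle : d.P ⊔ Subgroup.closure {d.b} ≤ S := by
    apply sup_le
    · intro u hu; exact ⟨u, hu, 0, by norm_num, by simp⟩
    · rw [Subgroup.closure_le]
      rintro s rfl
      exact ⟨1, one_mem _, 1, by norm_num, by simp⟩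
  exact hle hg

/-- every element of `N = P ⊔ ⟨b⟩ ⊔ ⟨t⟩` has the form `u * b^e * t^f`. -/
lemma nfN {g : G}
    (hg : g ∈ d.P ⊔ Subgroup.closure {d.b} ⊔ Subgroup.closure {d.a ^ 2 ^ (d.n - 2)}) :
    ∃ u ∈ d.P, ∃ e f : ℕ, e < 2 ∧ f < 2 ∧ g = u * d.b ^ e * (d.a ^ 2 ^ (d.n - 2)) ^ f := by
  haveI hPn := P_normal d
  let S : Subgroup G :=
    { carrier := {g | ∃ u ∈ d.P, ∃ e f : ℕ, e < 2 ∧ f < 2 ∧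
        g = u * d.b ^ e * (d.a ^ 2 ^ (d.n - 2)) ^ f}
      one_mem' := ⟨1, one_mem _, 0, 0, by norm_num, by norm_num, by simp⟩
      mul_mem' := by
        rintro g₁ g₂ ⟨u, hu, e, f, he, hf, rfl⟩ ⟨u', hu', e', f', he', hf', rfl⟩
        set c := d.b ^ e * (d.a ^ 2 ^ (d.n - 2)) ^ f with hc
        refine ⟨u * (c * u' * c⁻¹), mul_mem hu (hPn.conj_mem u' hu' _),
          (e + e') % 2, (f + f') % 2, Nat.mod_lt _ (by norm_num), Nat.mod_lt _ (by norm_num), ?_⟩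
        have h2 : c * d.b ^ e' * (d.a ^ 2 ^ (d.n - 2)) ^ f'
            = d.b ^ e * d.b ^ e' * ((d.a ^ 2 ^ (d.n - 2)) ^ f * (d.a ^ 2 ^ (d.n - 2)) ^ f') := by
          rw [hc]
          calc d.b ^ e * (d.a ^ 2 ^ (d.n - 2)) ^ f * d.b ^ e' * (d.a ^ 2 ^ (d.n - 2)) ^ f'
              = d.b ^ e * ((d.a ^ 2 ^ (d.n - 2)) ^ f * d.b ^ e') * (d.a ^ 2 ^ (d.n - 2)) ^ f' := by
                group
            _ = d.b ^ e * (d.b ^ e' * (d.a ^ 2 ^ (d.n - 2)) ^ f) * (d.a ^ 2 ^ (d.n - 2)) ^ f' := by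
                rw [((tb_comm d).pow_pow f e').eq]
            _ = d.b ^ e * d.b ^ e' * ((d.a ^ 2 ^ (d.n - 2)) ^ f * (d.a ^ 2 ^ (d.n - 2)) ^ f') := by
                group
        calc u * d.b ^ e * (d.a ^ 2 ^ (d.n - 2)) ^ f * (u' * d.b ^ e' * (d.a ^ 2 ^ (d.n - 2)) ^ f')
            = u * (c * u' * c⁻¹) * (c * d.b ^ e' * (d.a ^ 2 ^ (d.n - 2)) ^ f') := by
              rw [hc]; group
          _ = u * (c * u' * c⁻¹) *
              (d.b ^ e * d.b ^ e' * ((d.a ^ 2 ^ (d.n - 2)) ^ f * (d.a ^ 2 ^ (d.n - 2)) ^ f')) := by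
              rw [h2]
          _ = u * (c * u' * c⁻¹) * (d.b ^ (e + e') * (d.a ^ 2 ^ (d.n - 2)) ^ (f + f')) := by
              rw [pow_add, pow_add]
          _ = u * (c * u' * c⁻¹) *
              (d.b ^ ((e + e') % 2) * (d.a ^ 2 ^ (d.n - 2)) ^ ((f + f') % 2)) := by
              rw [← b_pow_reduce, ← t_pow_reduce]
          _ = u * (c * u' * c⁻¹) * d.b ^ ((e + e') % 2) * (d.a ^ 2 ^ (d.n - 2)) ^ ((f + f') % 2) := by
              group
      inv_mem' := by
        rintro g ⟨u, hu, e, f, he, hf, rfl⟩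
        have hbinv : (d.b ^ e)⁻¹ = d.b ^ e := by
          interval_cases e
          · simp
          · rw [pow_one]; exact b_inv d
        have htinv : ((d.a ^ 2 ^ (d.n - 2)) ^ f)⁻¹ = (d.a ^ 2 ^ (d.n - 2)) ^ f := by
          interval_cases f
          · simp
          · rw [pow_one]; exact t_inv d
        set c := d.b ^ e * (d.a ^ 2 ^ (d.n - 2)) ^ f with hc
        refine ⟨c⁻¹ * u⁻¹ * c, ?_, e, f, he, hf, ?_⟩
        · have := hPn.conj_mem u⁻¹ (inv_mem hu) c⁻¹
          simpa using this
        · have h1 : c⁻¹ = c := by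
            rw [hc, mul_inv_rev, hbinv, htinv]
            exact (((tb_comm d).pow_pow f e).eq)
          calc (u * d.b ^ e * (d.a ^ 2 ^ (d.n - 2)) ^ f)⁻¹
              = c⁻¹ * u⁻¹ := by rw [hc]; group
            _ = (c⁻¹ * u⁻¹ * c) * c⁻¹ := by group
            _ = (c⁻¹ * u⁻¹ * c) * c := by rw [h1]
            _ = c⁻¹ * u⁻¹ * c * d.b ^ e * (d.a ^ 2 ^ (d.n - 2)) ^ f := by rw [hc]; group }
  have hle : d.P ⊔ Subgroup.closure {d.b} ⊔ Subgroup.closure {d.a ^ 2 ^ (d.n - 2)} ≤ S := by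
    apply sup_le
    apply sup_le
    · intro u hu; exact ⟨u, hu, 0, 0, by norm_num, by norm_num, by simp⟩
    · rw [Subgroup.closure_le]
      rintro s rfl
      exact ⟨1, one_mem _, 1, 0, by norm_num, by norm_num, by simp⟩
    · rw [Subgroup.closure_le]
      rintro s rfl
      exact ⟨1, one_mem _, 0, 1, by norm_num, by norm_num, by simp⟩
  exact hle hg

/-! ### hypotheses on K -/

/-- `H = P ⊔ ⟨b⟩` -/
abbrev HH (d : GData G) : Subgroup G := d.P ⊔ Subgroup.closure {d.b}

/-- `N = P ⊔ ⟨b⟩ ⊔ ⟨t⟩` -/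
abbrev NN (d : GData G) : Subgroup G :=
  d.P ⊔ Subgroup.closure {d.b} ⊔ Subgroup.closure {d.a ^ 2 ^ (d.n - 2)}

lemma P_le_HH : d.P ≤ HH d := le_sup_left
lemma b_mem_HH : d.b ∈ HH d :=
  Subgroup.mem_sup_right (Subgroup.mem_closure_singleton.mpr ⟨1, zpow_one d.b⟩)
lemma x_mem_HH : d.x ∈ HH d := P_le_HH d (x_mem_P d)
lemma y_mem_HH (i : Fin d.r) : d.y i ∈ HH d := P_le_HH d (y_mem_P d i)
lemma z_mem_HH (i : Fin d.r) : d.z i ∈ HH d := P_le_HH d (z_mem_P d i)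
lemma HH_le_NN : HH d ≤ NN d := le_sup_left
lemma t_mem_NN : d.a ^ 2 ^ (d.n - 2) ∈ NN d :=
  Subgroup.mem_sup_right (Subgroup.mem_closure_singleton.mpr ⟨1, zpow_one _⟩)

lemma HH_eq_closure :
    HH d = Subgroup.closure ((({d.x} : Set G) ∪ Set.range d.y ∪ Set.range d.z) ∪ {d.b}) := by
  rw [Subgroup.closure_union]; rfl

/-- bundled hypotheses on `K` -/
structure KHyp (d : GData G) (K : Subgroup G) : Prop where
  le : K ≤ HH d
  norm : NormalIn (HH d) K
  ne : K ≠ HH d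
  nep : K ≠ d.P
  cyc : CyclicQuot (HH d) K

variable {K : Subgroup G}

/-- all commutators of `H` lie in `K` -/
lemma comm_mem (hK : KHyp d K) {h₁ h₂ : G} (hh₁ : h₁ ∈ HH d) (hh₂ : h₂ ∈ HH d) :
    h₁⁻¹ * h₂⁻¹ * h₁ * h₂ ∈ K := by
  obtain ⟨h, hh, hcov⟩ := hK.cyc
  obtain ⟨m₁, hm₁⟩ := hcov h₁ hh₁
  obtain ⟨m₂, hm₂⟩ := hcov h₂ hh₂
  set A := h ^ m₁ with hA
  set B := h ^ m₂ with hB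
  set κ₁ := A⁻¹ * h₁ with hk1
  set κ₂ := B⁻¹ * h₂ with hk2
  have hAH : A ∈ HH d := zpow_mem hh m₁
  have hBH : B ∈ HH d := zpow_mem hh m₂
  have h₁eq : h₁ = A * κ₁ := by rw [hk1]; group
  have h₂eq : h₂ = B * κ₂ := by rw [hk2]; group
  have hsw : B⁻¹ * A = A * B⁻¹ :=
    (((Commute.refl h).zpow_zpow m₁ m₂).inv_right.eq).symm
  have hc2 : A⁻¹ * κ₂⁻¹ * A ∈ K := hK.norm A hAH κ₂⁻¹ (inv_mem hm₂)
  have hc1 : B⁻¹ * κ₁ * B ∈ K := hK.norm B hBH κ₁ hm₁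
  have hid : h₁⁻¹ * h₂⁻¹ * h₁ * h₂
      = κ₁⁻¹ * ((A⁻¹ * κ₂⁻¹ * A) * ((B⁻¹ * κ₁ * B) * κ₂)) := by
    rw [h₁eq, h₂eq]
    calc (A * κ₁)⁻¹ * (B * κ₂)⁻¹ * (A * κ₁) * (B * κ₂)
        = κ₁⁻¹ * A⁻¹ * κ₂⁻¹ * (B⁻¹ * A) * κ₁ * B * κ₂ := by group
      _ = κ₁⁻¹ * A⁻¹ * κ₂⁻¹ * (A * B⁻¹) * κ₁ * B * κ₂ := by rw [hsw]
      _ = κ₁⁻¹ * ((A⁻¹ * κ₂⁻¹ * A) * ((B⁻¹ * κ₁ * B) * κ₂)) := by group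
  rw [hid]
  exact mul_mem (inv_mem hm₁) (mul_mem hc2 (mul_mem hc1 hm₂))

lemma x_mem_K (hK : KHyp d K) : d.x ∈ K := by
  have i0 : Fin d.r := ⟨0, d.hr⟩
  have h := comm_mem d hK (y_mem_HH d i0) (z_mem_HH d i0)
  rwa [d.hyz i0] at h

lemma zy_mem_K (hK : KHyp d K) (i : Fin d.r) : d.z i * d.y i ∈ K := by
  have h := comm_mem d hK (b_mem_HH d) (y_mem_HH d i)
  rwa [d.hby i] at h

lemma not_P_le_K (hK : KHyp d K) : ¬ d.P ≤ K := by
  intro hPK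
  by_cases hbK : d.b ∈ K
  · apply hK.ne
    apply le_antisymm hK.le
    exact sup_le hPK (by rw [Subgroup.closure_le]; rintro s rfl; exact hbK)
  · apply hK.nep
    apply le_antisymm _ hPK
    intro κ hκ
    obtain ⟨u, hu, e, he, rfl⟩ := nfH d (hK.le hκ)
    interval_cases e
    · simpa using hu
    · exfalso
      apply hbK
      have : d.b = u⁻¹ * (u * d.b ^ 1) := by group
      rw [this]
      exact mul_mem (inv_mem (hPK hu)) hκ

lemma y_all_K_absurd (hK : KHyp d K) (hy : ∀ i, d.y i ∈ K) : False := by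
  apply not_P_le_K d hK
  rw [GData.P, Subgroup.closure_le]
  rintro s ((rfl | ⟨i, rfl⟩) | ⟨i, rfl⟩)
  · exact x_mem_K d hK
  · exact hy i
  · have : d.z i = (d.z i * d.y i) * (d.y i)⁻¹ := by group
    rw [this]
    exact mul_mem (zy_mem_K d hK i) (inv_mem (hy i))

lemma z_all_K_absurd (hK : KHyp d K) (hz : ∀ i, d.z i ∈ K) : False := by
  apply y_all_K_absurd d hK
  intro i
  have : d.y i = (d.z i)⁻¹ * (d.z i * d.y i) := by group
  rw [this]
  exact mul_mem (inv_mem (hz i)) (zy_mem_K d hK i)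

lemma ypow_all_K_absurd (hK : KHyp d K) {m : ℤ} (hm : ((m : ZMod d.p)) ≠ 0)
    (h : ∀ i, d.y i ^ m ∈ K) : False :=
  y_all_K_absurd d hK (fun i => mem_of_zpow_mem d (d.hyp i) (h i) hm)

lemma zpow_all_K_absurd (hK : KHyp d K) {m : ℤ} (hm : ((m : ZMod d.p)) ≠ 0)
    (h : ∀ i, d.z i ^ m ∈ K) : False :=
  z_all_K_absurd d hK (fun i => mem_of_zpow_mem d (d.hzp i) (h i) hm)

lemma H_le_normalizer (hK : KHyp d K) : HH d ≤ Subgroup.normalizer (K : Set G) := by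
  intro g hg
  rw [Subgroup.mem_normalizer_iff]
  intro h
  constructor
  · intro hh
    have := hK.norm g⁻¹ (inv_mem hg) h hh
    simpa using this
  · intro hh
    have h1 : h = g⁻¹ * (g * h * g⁻¹) * g := by group
    rw [h1]
    exact hK.norm g hg _ hh

/-! ### conjugation by t -/

lemma t_conj (hK : KHyp d K) {g : G} (hg : g ∈ HH d) :
    (d.a ^ 2 ^ (d.n - 2))⁻¹ * g * d.a ^ 2 ^ (d.n - 2) ∈ HH d ∧
    ((d.a ^ 2 ^ (d.n - 2))⁻¹ * g * d.a ^ 2 ^ (d.n - 2)) * g ∈ K := by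
  rw [HH_eq_closure d] at hg
  induction hg using Subgroup.closure_induction with
  | mem s hs =>
    rcases hs with ((rfl | ⟨i, rfl⟩) | ⟨i, rfl⟩) | rfl
    · -- x
      have hc : Commute (d.a ^ 2 ^ (d.n - 2)) d.x := (comm_ax d).pow_left _
      have hx : (d.a ^ 2 ^ (d.n - 2))⁻¹ * d.x * d.a ^ 2 ^ (d.n - 2) = d.x := by
        calc (d.a ^ 2 ^ (d.n - 2))⁻¹ * d.x * d.a ^ 2 ^ (d.n - 2)
            = (d.a ^ 2 ^ (d.n - 2))⁻¹ * (d.x * d.a ^ 2 ^ (d.n - 2)) := by group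
          _ = (d.a ^ 2 ^ (d.n - 2))⁻¹ * (d.a ^ 2 ^ (d.n - 2) * d.x) := by rw [← hc.eq]
          _ = d.x := by group
      rw [hx]
      exact ⟨x_mem_HH d, mul_mem (x_mem_K d hK) (x_mem_K d hK)⟩
    · -- y i
      have h := conj_ypow_t d i 1
      rw [zpow_one] at h
      rw [h]
      constructor
      · exact zpow_mem (y_mem_HH d i) _
      · have : d.y i ^ (-1:ℤ) * d.y i = 1 := by group
        rw [this]; exact one_mem K
    · -- z i
      have h := conj_zpow_t d i 1
      rw [zpow_one] at h
      rw [h]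
      constructor
      · exact zpow_mem (z_mem_HH d i) _
      · have : d.z i ^ (-1:ℤ) * d.z i = 1 := by group
        rw [this]; exact one_mem K
    · -- b
      have hc := tb_comm d
      have hb : (d.a ^ 2 ^ (d.n - 2))⁻¹ * d.b * d.a ^ 2 ^ (d.n - 2) = d.b := by
        calc (d.a ^ 2 ^ (d.n - 2))⁻¹ * d.b * d.a ^ 2 ^ (d.n - 2)
            = (d.a ^ 2 ^ (d.n - 2))⁻¹ * (d.b * d.a ^ 2 ^ (d.n - 2)) := by group
          _ = (d.a ^ 2 ^ (d.n - 2))⁻¹ * (d.a ^ 2 ^ (d.n - 2) * d.b) := by rw [hc.eq]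
          _ = d.b := by group
      rw [hb]
      refine ⟨b_mem_HH d, ?_⟩
      rw [← pow_two, d.hb2]
      exact one_mem K
  | one =>
    constructor
    · simpa using one_mem (HH d)
    · simpa using one_mem K
  | mul g₁ g₂ hg₁ hg₂ ih₁ ih₂ =>
    have hg₁H : g₁ ∈ HH d := by rw [HH_eq_closure d]; exact hg₁
    have hg₂H : g₂ ∈ HH d := by rw [HH_eq_closure d]; exact hg₂
    set t := d.a ^ 2 ^ (d.n - 2) with ht
    set A := t⁻¹ * g₁ * t with hA
    set B := t⁻¹ * g₂ * t with hB
    have h1 : t⁻¹ * (g₁ * g₂) * t = A * B := by rw [hA, hB]; group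
    have hc : B⁻¹ * g₁⁻¹ * B * g₁ ∈ K := comm_mem d hK ih₂.1 hg₁H
    constructor
    · rw [h1]; exact mul_mem ih₁.1 ih₂.1
    · rw [h1]
      have hid : (A * B) * (g₁ * g₂)
          = ((A * g₁) * (B * g₂)) * (g₂⁻¹ * (B⁻¹ * g₁⁻¹ * B * g₁) * g₂) := by group
      rw [hid]
      exact mul_mem (mul_mem ih₁.2 ih₂.2) (hK.norm g₂ hg₂H _ hc)
  | inv g hg ih =>
    have hgH : g ∈ HH d := by rw [HH_eq_closure d]; exact hg
    set t := d.a ^ 2 ^ (d.n - 2) with ht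
    set A := t⁻¹ * g * t with hA
    have h1 : t⁻¹ * g⁻¹ * t = A⁻¹ := by rw [hA]; group
    constructor
    · rw [h1]; exact inv_mem ih.1
    · rw [h1]
      have hid : A⁻¹ * g⁻¹ = ((A * g)⁻¹) * ((A⁻¹)⁻¹ * (g⁻¹)⁻¹ * A⁻¹ * g⁻¹) := by group
      rw [hid]
      exact mul_mem (inv_mem ih.2) (comm_mem d hK (inv_mem ih.1) (inv_mem hgH))

lemma t_mem_normalizer (hK : KHyp d K) : d.a ^ 2 ^ (d.n - 2) ∈ Subgroup.normalizer (K : Set G) := by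
  have htinv : (d.a ^ 2 ^ (d.n - 2))⁻¹ = d.a ^ 2 ^ (d.n - 2) := t_inv d
  have hfwd : ∀ κ ∈ K, (d.a ^ 2 ^ (d.n - 2))⁻¹ * κ * d.a ^ 2 ^ (d.n - 2) ∈ K := by
    intro κ hκ
    have h := t_conj d hK (hK.le hκ)
    have h2 : (d.a ^ 2 ^ (d.n - 2))⁻¹ * κ * d.a ^ 2 ^ (d.n - 2)
        = (((d.a ^ 2 ^ (d.n - 2))⁻¹ * κ * d.a ^ 2 ^ (d.n - 2)) * κ) * κ⁻¹ := by group
    rw [h2]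
    exact mul_mem h.2 (inv_mem hκ)
  rw [Subgroup.mem_normalizer_iff]
  intro h
  constructor
  · intro hh
    have h3 := hfwd h hh
    rw [htinv] at h3 ⊢
    exact h3
  · intro hh
    have h2 := hfwd _ hh
    have h3 : h = (d.a ^ 2 ^ (d.n - 2))⁻¹ * (d.a ^ 2 ^ (d.n - 2) * h *
        (d.a ^ 2 ^ (d.n - 2))⁻¹) * d.a ^ 2 ^ (d.n - 2) := by group
    rw [h3]; exact h2

lemma NN_le_normalizer (hK : KHyp d K) : NN d ≤ Subgroup.normalizer (K : Set G) := by
  apply sup_le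
  · exact H_le_normalizer d hK
  · rw [Subgroup.closure_le]
    rintro s rfl
    exact t_mem_normalizer d hK

lemma t_mem_H_normalizer (hK : KHyp d K) : d.a ^ 2 ^ (d.n - 2) ∈ Subgroup.normalizer (HH d : Set G) := by
  have htinv : (d.a ^ 2 ^ (d.n - 2))⁻¹ = d.a ^ 2 ^ (d.n - 2) := t_inv d
  rw [Subgroup.mem_normalizer_iff]
  intro h
  constructor
  · intro hh
    have h3 := (t_conj d hK hh).1
    rw [htinv] at h3 ⊢
    exact h3
  · intro hh
    have h2 := (t_conj d hK hh).1
    have h3 : h = (d.a ^ 2 ^ (d.n - 2))⁻¹ * (d.a ^ 2 ^ (d.n - 2) * h *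
        (d.a ^ 2 ^ (d.n - 2))⁻¹) * d.a ^ 2 ^ (d.n - 2) := by group
    rw [h3]; exact h2

/-! ### the key exponent computation -/

lemma conj_ypow_b (i : Fin d.r) (s : ℤ) : d.b⁻¹ * d.y i ^ s * d.b = d.z i ^ (-s) := by
  rw [conj_zpow', conj_y_b, inv_zpow, ← zpow_neg]

lemma conj_zpow_b (i : Fin d.r) (s : ℤ) : d.b⁻¹ * d.z i ^ s * d.b = d.y i ^ (-s) := by
  rw [conj_zpow', conj_z_b, inv_zpow, ← zpow_neg]

lemma kj_eq_qj_of_wv_mem (hK : KHyp d K) (j e : ℕ) (he : e < 2)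
    (h : ∀ i, (d.z i * d.y i) *
      ((d.a ^ j * d.b ^ e)⁻¹ * (d.z i * d.y i)⁻¹ * (d.a ^ j * d.b ^ e)) ∈ K) :
    ((d.k : ZMod d.p)) ^ j = ((d.q : ZMod d.p)) ^ j := by
  by_contra hne
  interval_cases e
  · -- e = 0
    apply ypow_all_K_absurd d hK (m := (d.q:ℤ)^j - (d.k:ℤ)^j)
    · intro h0
      apply hne
      push_cast at h0
      have : ((d.q:ZMod d.p))^j = ((d.k:ZMod d.p))^j := by
        have := sub_eq_zero.mp h0
        exact this
      exact this.symm
    intro i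
    have hW := h i
    have hv : (d.a ^ j * d.b ^ 0)⁻¹ * (d.z i * d.y i)⁻¹ * (d.a ^ j * d.b ^ 0)
        = ((d.a ^ j)⁻¹ * d.y i ^ (-1:ℤ) * d.a ^ j) *
          ((d.a ^ j)⁻¹ * d.z i ^ (-1:ℤ) * d.a ^ j) := by
      rw [pow_zero]; group
    rw [hv, conj_y_apow, conj_z_apow] at hW
    -- hW : (z*y) * (y^{-KJ} * z^{-QJ}) ∈ K
    have hκ₁ : (d.z i)⁻¹ * ((d.z i * d.y i) *
        (d.y i ^ ((-1:ℤ) * (d.k:ℤ)^j) * d.z i ^ ((-1:ℤ) * (d.q:ℤ)^j))) * d.z i ∈ K :=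
      hK.norm _ (z_mem_HH d i) _ hW
    have hκ₁eq : (d.z i)⁻¹ * ((d.z i * d.y i) *
        (d.y i ^ ((-1:ℤ) * (d.k:ℤ)^j) * d.z i ^ ((-1:ℤ) * (d.q:ℤ)^j))) * d.z i
        = d.y i ^ (1 + (-1:ℤ) * (d.k:ℤ)^j) * d.z i ^ (1 + (-1:ℤ) * (d.q:ℤ)^j) := by
      rw [zpow_add, zpow_add]; group
    rw [hκ₁eq] at hκ₁
    -- A3 : z^{-c} * y^{-c} ∈ K where c = 1 - QJ
    obtain ⟨s, hs⟩ := zy_pow d i (-(1 + (-1:ℤ) * (d.q:ℤ)^j))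
    have hA3 : d.z i ^ (-(1 + (-1:ℤ) * (d.q:ℤ)^j)) * d.y i ^ (-(1 + (-1:ℤ) * (d.q:ℤ)^j)) ∈ K := by
      have heq : d.z i ^ (-(1 + (-1:ℤ) * (d.q:ℤ)^j)) * d.y i ^ (-(1 + (-1:ℤ) * (d.q:ℤ)^j))
          = (d.z i * d.y i) ^ (-(1 + (-1:ℤ) * (d.q:ℤ)^j)) * d.x ^ (-s) := by
        rw [hs]; group
      rw [heq]
      exact mul_mem (zpow_mem (zy_mem_K d hK i) _) (zpow_mem (x_mem_K d hK) _)
    have hP : d.y i ^ (1 + (-1:ℤ) * (d.k:ℤ)^j) * d.z i ^ (1 + (-1:ℤ) * (d.q:ℤ)^j) *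
        (d.z i ^ (-(1 + (-1:ℤ) * (d.q:ℤ)^j)) * d.y i ^ (-(1 + (-1:ℤ) * (d.q:ℤ)^j))) ∈ K :=
      mul_mem hκ₁ hA3
    have hPeq : d.y i ^ (1 + (-1:ℤ) * (d.k:ℤ)^j) * d.z i ^ (1 + (-1:ℤ) * (d.q:ℤ)^j) *
        (d.z i ^ (-(1 + (-1:ℤ) * (d.q:ℤ)^j)) * d.y i ^ (-(1 + (-1:ℤ) * (d.q:ℤ)^j)))
        = d.y i ^ ((d.q:ℤ)^j - (d.k:ℤ)^j) := by
      group
    rwa [hPeq] at hP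
  · -- e = 1
    apply zpow_all_K_absurd d hK (m := (d.k:ℤ)^j - (d.q:ℤ)^j)
    · intro h0
      apply hne
      push_cast at h0
      exact sub_eq_zero.mp h0
    intro i
    have hW := h i
    have hv : (d.a ^ j * d.b ^ 1)⁻¹ * (d.z i * d.y i)⁻¹ * (d.a ^ j * d.b ^ 1)
        = (d.b⁻¹ * (d.y i ^ ((-1:ℤ) * (d.k:ℤ)^j)) * d.b) *
          (d.b⁻¹ * (d.z i ^ ((-1:ℤ) * (d.q:ℤ)^j)) * d.b) := by
      rw [pow_one]
      have h1 : (d.a ^ j * d.b)⁻¹ * (d.z i * d.y i)⁻¹ * (d.a ^ j * d.b)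
          = d.b⁻¹ * (((d.a ^ j)⁻¹ * d.y i ^ (-1:ℤ) * d.a ^ j) *
            ((d.a ^ j)⁻¹ * d.z i ^ (-1:ℤ) * d.a ^ j)) * d.b := by group
      rw [h1, conj_y_apow, conj_z_apow]; group
    rw [hv, conj_ypow_b, conj_zpow_b] at hW
    -- hW : (z*y) * (z^{KJ} * y^{QJ}) ∈ K
    have hsw := swap_yz d i 1 (-((-1:ℤ) * (d.k:ℤ)^j))
    rw [zpow_one] at hsw
    have hWeq : (d.z i * d.y i) * (d.z i ^ (-((-1:ℤ) * (d.k:ℤ)^j)) *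
        d.y i ^ (-((-1:ℤ) * (d.q:ℤ)^j)))
        = (d.z i ^ (1 + (d.k:ℤ)^j) * d.y i ^ (1 + (d.q:ℤ)^j)) * d.x ^ ((d.k:ℤ)^j) := by
      calc (d.z i * d.y i) * (d.z i ^ (-((-1:ℤ) * (d.k:ℤ)^j)) * d.y i ^ (-((-1:ℤ) * (d.q:ℤ)^j)))
          = d.z i * (d.y i * d.z i ^ (-((-1:ℤ) * (d.k:ℤ)^j))) *
            d.y i ^ (-((-1:ℤ) * (d.q:ℤ)^j)) := by group
        _ = d.z i * (d.z i ^ (-((-1:ℤ) * (d.k:ℤ)^j)) *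
            (d.y i * d.x ^ (1 * -((-1:ℤ) * (d.k:ℤ)^j)))) *
            d.y i ^ (-((-1:ℤ) * (d.q:ℤ)^j)) := by rw [hsw]
        _ = d.z i ^ (1 + -((-1:ℤ) * (d.k:ℤ)^j)) * (d.y i *
            (d.x ^ (1 * -((-1:ℤ) * (d.k:ℤ)^j)) * d.y i ^ (-((-1:ℤ) * (d.q:ℤ)^j)))) := by
            rw [zpow_add, zpow_one]; group
        _ = d.z i ^ (1 + -((-1:ℤ) * (d.k:ℤ)^j)) * (d.y i *
            (d.y i ^ (-((-1:ℤ) * (d.q:ℤ)^j)) * d.x ^ (1 * -((-1:ℤ) * (d.k:ℤ)^j)))) := by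
            rw [(((comm_xy d i).zpow_right _).zpow_left _).eq]
        _ = (d.z i ^ (1 + (d.k:ℤ)^j) * d.y i ^ (1 + (d.q:ℤ)^j)) * d.x ^ ((d.k:ℤ)^j) := by
            rw [zpow_add (d.y i), zpow_one]
            have e1 : (1 : ℤ) + -((-1:ℤ) * (d.k:ℤ)^j) = 1 + (d.k:ℤ)^j := by ring
            have e2 : -((-1:ℤ) * (d.q:ℤ)^j) = (d.q:ℤ)^j := by ring
            have e3 : (1:ℤ) * -((-1:ℤ) * (d.k:ℤ)^j) = (d.k:ℤ)^j := by ring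
            rw [e1, e2, e3]; group
    rw [hWeq] at hW
    have hA2 : d.z i ^ (1 + (d.k:ℤ)^j) * d.y i ^ (1 + (d.q:ℤ)^j) ∈ K := by
      have heq : d.z i ^ (1 + (d.k:ℤ)^j) * d.y i ^ (1 + (d.q:ℤ)^j)
          = (d.z i ^ (1 + (d.k:ℤ)^j) * d.y i ^ (1 + (d.q:ℤ)^j)) * d.x ^ ((d.k:ℤ)^j) *
            d.x ^ (-((d.k:ℤ)^j)) := by group
      rw [heq]
      exact mul_mem hW (zpow_mem (x_mem_K d hK) _)
    obtain ⟨s, hs⟩ := zy_pow d i (-(1 + (d.q:ℤ)^j))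
    have hA3 : d.z i ^ (-(1 + (d.q:ℤ)^j)) * d.y i ^ (-(1 + (d.q:ℤ)^j)) ∈ K := by
      have heq : d.z i ^ (-(1 + (d.q:ℤ)^j)) * d.y i ^ (-(1 + (d.q:ℤ)^j))
          = (d.z i * d.y i) ^ (-(1 + (d.q:ℤ)^j)) * d.x ^ (-s) := by
        rw [hs]; group
      rw [heq]
      exact mul_mem (zpow_mem (zy_mem_K d hK i) _) (zpow_mem (x_mem_K d hK) _)
    -- need y^{-c} * z^{-c} form: invert hA3's partner
    have hA4 : d.y i ^ (-(1 + (d.q:ℤ)^j)) * d.z i ^ (-(1 + (d.q:ℤ)^j)) ∈ K := by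
      obtain ⟨s', hs'⟩ := zy_pow d i (1 + (d.q:ℤ)^j)
      have heq : d.y i ^ (-(1 + (d.q:ℤ)^j)) * d.z i ^ (-(1 + (d.q:ℤ)^j))
          = ((d.z i * d.y i) ^ (1 + (d.q:ℤ)^j) * d.x ^ (-s'))⁻¹ := by
        rw [hs']; group
      rw [heq]
      exact inv_mem (mul_mem (zpow_mem (zy_mem_K d hK i) _) (zpow_mem (x_mem_K d hK) _))
    have hP := mul_mem hA2 hA4
    have hPeq : d.z i ^ (1 + (d.k:ℤ)^j) * d.y i ^ (1 + (d.q:ℤ)^j) *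
        (d.y i ^ (-(1 + (d.q:ℤ)^j)) * d.z i ^ (-(1 + (d.q:ℤ)^j)))
        = d.z i ^ ((d.k:ℤ)^j - (d.q:ℤ)^j) := by
      group
    rwa [hPeq] at hP

/-! ### the normalizer -/

lemma normalizer_eq (hK : KHyp d K) : Subgroup.normalizer (K : Set G) = NN d := by
  apply le_antisymm _ (NN_le_normalizer d hK)
  intro g hg
  obtain ⟨u, hu, j, e, he, rfl⟩ := nfG d g
  have hdd : d.a ^ j * d.b ^ e ∈ Subgroup.normalizer (K : Set G) := by
    have hu' : u ∈ Subgroup.normalizer (K : Set G) := H_le_normalizer d hK (P_le_HH d hu)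
    have h1 : d.a ^ j * d.b ^ e = u⁻¹ * (u * d.a ^ j * d.b ^ e) := by group
    rw [h1]
    exact mul_mem (inv_mem hu') hg
  have hwv : ∀ i, (d.z i * d.y i) *
      ((d.a ^ j * d.b ^ e)⁻¹ * (d.z i * d.y i)⁻¹ * (d.a ^ j * d.b ^ e)) ∈ K := by
    intro i
    have hw := zy_mem_K d hK i
    have hv := (Subgroup.mem_normalizer_iff.mp (inv_mem hdd) ((d.z i * d.y i)⁻¹)).mp
      (inv_mem hw)
    rw [inv_inv] at hv
    exact mul_mem hw hv
  have hkq := kj_eq_qj_of_wv_mem d hK j e he hwv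
  obtain ⟨m, rfl⟩ := dvd_of_kj_qj d hkq
  have hajt : d.a ^ (2 ^ (d.n - 2) * m) = (d.a ^ 2 ^ (d.n - 2)) ^ m := by rw [pow_mul]
  rw [hajt]
  exact mul_mem (mul_mem (HH_le_NN d (P_le_HH d hu)) (pow_mem (t_mem_NN d) m))
    (pow_mem (HH_le_NN d (b_mem_HH d)) e)

/-! ### SS2 maximality -/

lemma max_abelian (hK : KHyp d K) (C : Subgroup G) (hCN : C ≤ Subgroup.normalizer (K : Set G))
    (hab : ∀ c₁ ∈ C, ∀ c₂ ∈ C, c₁⁻¹ * c₂⁻¹ * c₁ * c₂ ∈ K) (hHC : HH d ≤ C) : C = HH d := by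
  have hCN' : C ≤ NN d := hCN.trans (le_of_eq (normalizer_eq d hK))
  apply le_antisymm _ hHC
  intro c hc
  obtain ⟨u, hu, e, f, he, hf, rfl⟩ := nfN d (hCN' hc)
  interval_cases f
  · simpa using mul_mem (P_le_HH d hu) (pow_mem (b_mem_HH d) e)
  · exfalso
    have htC : d.a ^ 2 ^ (d.n - 2) ∈ C := by
      have h1 : d.a ^ 2 ^ (d.n - 2)
          = (u * d.b ^ e)⁻¹ * (u * d.b ^ e * (d.a ^ 2 ^ (d.n - 2)) ^ 1) := by group
      rw [h1]
      exact mul_mem (inv_mem (hHC (mul_mem (P_le_HH d hu) (pow_mem (b_mem_HH d) e)))) hc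
    apply ypow_all_K_absurd d hK (m := (2:ℤ))
    · intro h0
      apply two_ne_zero_zmod d
      exact_mod_cast h0
    intro i
    have hcomm := hab _ htC _ (hHC (y_mem_HH d i))
    have hc2 := conj_ypow_t d i (-1)
    rw [neg_neg] at hc2
    have heq : (d.a ^ 2 ^ (d.n - 2))⁻¹ * (d.y i)⁻¹ * d.a ^ 2 ^ (d.n - 2) * d.y i
        = d.y i ^ (2:ℤ) := by
      calc (d.a ^ 2 ^ (d.n - 2))⁻¹ * (d.y i)⁻¹ * d.a ^ 2 ^ (d.n - 2) * d.y i
          = ((d.a ^ 2 ^ (d.n - 2))⁻¹ * d.y i ^ (-1:ℤ) * d.a ^ 2 ^ (d.n - 2)) * d.y i := by group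
        _ = d.y i ^ (1:ℤ) * d.y i := by rw [hc2]
        _ = d.y i ^ (2:ℤ) := by
            rw [zpow_one]
            have h4 : ((2:ℤ)) = ((2:ℕ):ℤ) := by norm_num
            rw [h4, zpow_natCast, pow_two]
    rw [heq] at hcomm
    exact hcomm

/-! ### SS1 -/

lemma normalizer_conj_H (hK : KHyp d K) :
    ∀ g ∈ Subgroup.normalizer (K : Set G), ∀ h ∈ HH d, g⁻¹ * h * g ∈ HH d := by
  intro g hg h hh
  rw [normalizer_eq d hK] at hg
  have hNle : NN d ≤ Subgroup.normalizer (HH d : Set G) := by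
    apply sup_le
    · exact Subgroup.le_normalizer
    · rw [Subgroup.closure_le]
      rintro s rfl
      exact t_mem_H_normalizer d hK
  have hg' : g⁻¹ ∈ Subgroup.normalizer (HH d : Set G) := inv_mem (hNle hg)
  have h2 := (Subgroup.mem_normalizer_iff.mp hg' h).mp hh
  simpa using h2

/-! ### group algebra lemmas -/

lemma mul_hat_expand (X : MonoidAlgebra ℚ G) (M : Subgroup G) :
    X * hat M = (Nat.card M : ℚ)⁻¹ • ∑ m : M, (X * MonoidAlgebra.of ℚ G (m : G)) := by
  unfold hat
  rw [mul_smul_comm, Finset.mul_sum]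

lemma hat_mul_expand (M : Subgroup G) (X : MonoidAlgebra ℚ G) :
    hat M * X = (Nat.card M : ℚ)⁻¹ • ∑ m : M, (MonoidAlgebra.of ℚ G (m : G) * X) := by
  unfold hat
  rw [smul_mul_assoc, Finset.sum_mul]

lemma hat_mul_of {M : Subgroup G} {m : G} (hm : m ∈ M) :
    hat M * MonoidAlgebra.of ℚ G m = hat M := by
  unfold hat
  rw [smul_mul_assoc, Finset.sum_mul]
  congr 1
  have h1 : ∀ x : M, MonoidAlgebra.of ℚ G (x : G) * MonoidAlgebra.of ℚ G m
      = MonoidAlgebra.of ℚ G ((x : G) * m) := fun x => (map_mul _ _ _).symm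
  rw [Finset.sum_congr rfl (fun x _ => h1 x)]
  apply Fintype.sum_equiv (Equiv.mulRight (⟨m, hm⟩ : M))
  intro x
  rfl

lemma of_mul_hat {M : Subgroup G} {m : G} (hm : m ∈ M) :
    MonoidAlgebra.of ℚ G m * hat M = hat M := by
  unfold hat
  rw [mul_smul_comm, Finset.mul_sum]
  congr 1
  have h1 : ∀ x : M, MonoidAlgebra.of ℚ G m * MonoidAlgebra.of ℚ G (x : G)
      = MonoidAlgebra.of ℚ G (m * (x : G)) := fun x => (map_mul _ _ _).symm
  rw [Finset.sum_congr rfl (fun x _ => h1 x)]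
  apply Fintype.sum_equiv (Equiv.mulLeft (⟨m, hm⟩ : M))
  intro x
  rfl

lemma card_ne_zero_q (M : Subgroup G) : (Nat.card M : ℚ) ≠ 0 := by
  have : 0 < Nat.card M := Nat.card_pos
  exact_mod_cast this.ne'

lemma hat_mul_hat_of_le {M M' : Subgroup G} (h : M ≤ M') : hat M * hat M' = hat M' := by
  rw [hat_mul_expand M (hat M'), Finset.sum_congr rfl (fun m _ => of_mul_hat (h m.2))]
  rw [Finset.sum_const, Finset.card_univ]
  rw [← Nat.cast_smul_eq_nsmul ℚ, smul_smul]
  rw [Nat.card_eq_fintype_card]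
  rw [inv_mul_cancel₀ (by rw [← Nat.card_eq_fintype_card]; exact card_ne_zero_q M), one_smul]

lemma hat_mul_hat_of_le' {M M' : Subgroup G} (h : M ≤ M') : hat M' * hat M = hat M' := by
  rw [mul_hat_expand (hat M') M, Finset.sum_congr rfl (fun m _ => hat_mul_of (h m.2))]
  rw [Finset.sum_const, Finset.card_univ]
  rw [← Nat.cast_smul_eq_nsmul ℚ, smul_smul]
  rw [Nat.card_eq_fintype_card]
  rw [inv_mul_cancel₀ (by rw [← Nat.card_eq_fintype_card]; exact card_ne_zero_q M), one_smul]

lemma hat_idem (M : Subgroup G) : hat M * hat M = hat M := hat_mul_hat_of_le le_rfl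

lemma of_hat_comm {M : Subgroup G} {w : G} (hw : w ∈ Subgroup.normalizer (M : Set G)) :
    MonoidAlgebra.of ℚ G w * hat M = hat M * MonoidAlgebra.of ℚ G w := by
  unfold hat
  rw [mul_smul_comm, smul_mul_assoc]
  congr 1
  rw [Finset.mul_sum, Finset.sum_mul]
  have hmem : ∀ m : M, w * (m : G) * w⁻¹ ∈ M := fun m =>
    (Subgroup.mem_normalizer_iff.mp hw (m : G)).mp m.2
  have hmem' : ∀ m : M, w⁻¹ * (m : G) * w ∈ M := fun m => by
    have h2 := (Subgroup.mem_normalizer_iff.mp (inv_mem hw) (m : G)).mp m.2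
    simpa using h2
  let e : M ≃ M :=
    { toFun := fun m => ⟨w * m * w⁻¹, hmem m⟩
      invFun := fun m => ⟨w⁻¹ * m * w, hmem' m⟩
      left_inv := fun m => by
        apply Subtype.ext
        show w⁻¹ * (w * (m : G) * w⁻¹) * w = (m : G)
        group
      right_inv := fun m => by
        apply Subtype.ext
        show w * (w⁻¹ * (m : G) * w) * w⁻¹ = (m : G)
        group }
  apply Fintype.sum_equiv e
  intro m
  show MonoidAlgebra.of ℚ G w * MonoidAlgebra.of ℚ G (m : G)
      = MonoidAlgebra.of ℚ G ((w * (m : G) * w⁻¹)) * MonoidAlgebra.of ℚ G w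
  rw [← map_mul, ← map_mul]
  congr 1
  group

lemma hat_hat_comm {M M' : Subgroup G} (h : ∀ m : G, m ∈ M' → m ∈ Subgroup.normalizer (M : Set G)) :
    hat M' * hat M = hat M * hat M' := by
  rw [hat_mul_expand M' (hat M), mul_hat_expand (hat M) M']
  congr 1
  exact Finset.sum_congr rfl (fun m _ => of_hat_comm (h (m : G) m.2))

/-! ### minimal over and vanishing -/

lemma normalover_mem_normalizer {Hh K' L : Subgroup G} (hL : NormalOver Hh K' L) {w : G}
    (hw : w ∈ Hh) : w ∈ Subgroup.normalizer (L : Set G) := by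
  rw [Subgroup.mem_normalizer_iff]
  intro l
  constructor
  · intro hl
    have h2 := hL.2.2 w⁻¹ (inv_mem hw) l hl
    simpa using h2
  · intro hl
    have h2 := hL.2.2 w hw _ hl
    have h3 : l = w⁻¹ * (w * l * w⁻¹) * w := by group
    rw [h3]; exact h2

lemma exists_minimal_over {Hh K' J : Subgroup G} (hJ : NormalOver Hh K' J) :
    ∃ L, MinimalOver Hh K' L ∧ L ≤ J := by
  let T : Finset (Subgroup G) := Set.toFinset {L' | NormalOver Hh K' L' ∧ L' ≤ J}
  have hJT : J ∈ T := by rw [Set.mem_toFinset]; exact ⟨hJ, le_rfl⟩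
  obtain ⟨L, hLT, hmin⟩ := T.exists_min_image (fun L => Nat.card L) ⟨J, hJT⟩
  rw [Set.mem_toFinset] at hLT
  refine ⟨L, ⟨hLT.1, ?_⟩, hLT.2⟩
  intro L' hL' hle
  have hL'T : L' ∈ T := by rw [Set.mem_toFinset]; exact ⟨hL', hle.trans hLT.2⟩
  have hcard := hmin L' hL'T
  apply SetLike.coe_injective
  apply Set.eq_of_subset_of_ncard_le hle
  rw [← Nat.card_coe_set_eq, ← Nat.card_coe_set_eq]
  exact hcard

lemma eps_factor_commute {Hh K' L₁ L₂ : Subgroup G}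
    (h₁ : NormalOver Hh K' L₁) (h₂ : NormalOver Hh K' L₂) :
    Commute (hat K' - hat L₁) (hat K' - hat L₂) := by
  have hL12 : hat L₁ * hat L₂ = hat L₂ * hat L₁ := by
    apply (hat_hat_comm _).symm
    intro m hm
    exact normalover_mem_normalizer h₁ (h₂.1 hm)
  show (hat K' - hat L₁) * (hat K' - hat L₂) = (hat K' - hat L₂) * (hat K' - hat L₁)
  rw [sub_mul, sub_mul, mul_sub, mul_sub, mul_sub, mul_sub]
  rw [hat_mul_hat_of_le (le_of_lt h₁.2.1), hat_mul_hat_of_le (le_of_lt h₂.2.1),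
    hat_mul_hat_of_le' (le_of_lt h₁.2.1), hat_mul_hat_of_le' (le_of_lt h₂.2.1), hL12]
  abel

lemma factor_vanish {K' L : Subgroup G} {g v : G} (hKL : K' ≤ L)
    (hLelts : ∀ l ∈ L, ∃ κ ∈ K', ∃ s : ℤ, l = κ * v ^ s)
    (hgv : ∀ s : ℤ, g * v ^ s * g⁻¹ ∈ K') :
    (hat K' - hat L) * (MonoidAlgebra.of ℚ G g⁻¹ * hat K' * MonoidAlgebra.of ℚ G g) = 0 := by
  set X := MonoidAlgebra.of ℚ G g⁻¹ * hat K' * MonoidAlgebra.of ℚ G g with hX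
  have hterm : ∀ l : L, hat K' * (MonoidAlgebra.of ℚ G (l : G) * X) = hat K' * X := by
    intro l
    obtain ⟨κ, hκ, s, hls⟩ := hLelts (l : G) l.2
    have h1 : MonoidAlgebra.of ℚ G (l : G)
        = MonoidAlgebra.of ℚ G κ * MonoidAlgebra.of ℚ G (v ^ s) := by
      rw [← map_mul, hls]
    have h2 : MonoidAlgebra.of ℚ G (v ^ s) * MonoidAlgebra.of ℚ G g⁻¹
        = MonoidAlgebra.of ℚ G g⁻¹ * MonoidAlgebra.of ℚ G (g * v ^ s * g⁻¹) := by
      rw [← map_mul, ← map_mul]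
      congr 1
      group
    calc hat K' * (MonoidAlgebra.of ℚ G (l : G) * X)
        = (hat K' * MonoidAlgebra.of ℚ G κ) *
          (MonoidAlgebra.of ℚ G (v ^ s) * MonoidAlgebra.of ℚ G g⁻¹) * hat K' *
          MonoidAlgebra.of ℚ G g := by
          rw [h1, hX]; simp only [mul_assoc]
      _ = hat K' * (MonoidAlgebra.of ℚ G g⁻¹ *
          MonoidAlgebra.of ℚ G (g * v ^ s * g⁻¹)) * hat K' * MonoidAlgebra.of ℚ G g := by
          rw [hat_mul_of hκ, h2]
      _ = hat K' * MonoidAlgebra.of ℚ G g⁻¹ *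
          (MonoidAlgebra.of ℚ G (g * v ^ s * g⁻¹) * hat K') * MonoidAlgebra.of ℚ G g := by
          simp only [mul_assoc]
      _ = hat K' * MonoidAlgebra.of ℚ G g⁻¹ * hat K' * MonoidAlgebra.of ℚ G g := by
          rw [of_mul_hat (hgv s)]
      _ = hat K' * X := by rw [hX]; simp only [mul_assoc]
  rw [sub_mul]
  have hKLX : hat L * X = hat K' * (hat L * X) := by
    conv_lhs => rw [← hat_mul_hat_of_le hKL, mul_assoc]
  rw [hKLX, hat_mul_expand L X, mul_smul_comm, Finset.mul_sum]
  rw [Finset.sum_congr rfl (fun l _ => hterm l)]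
  rw [Finset.sum_const, Finset.card_univ, ← Nat.cast_smul_eq_nsmul ℚ, smul_smul,
    Nat.card_eq_fintype_card,
    inv_mul_cancel₀ (by rw [← Nat.card_eq_fintype_card]; exact card_ne_zero_q L), one_smul,
    sub_self]

/-! ### SS3 -/

lemma SS3 (hK : KHyp d K) : ∀ g : G, g ∉ Subgroup.normalizer (K : Set G) →
    eps (HH d) K * (MonoidAlgebra.of ℚ G g⁻¹ * eps (HH d) K * MonoidAlgebra.of ℚ G g) = 0 := by
  intro g hg
  obtain ⟨u, hu, j, e, he, hgeq⟩ := nfG d g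
  set dd := d.a ^ j * d.b ^ e with hdd
  have hu_norm : u ∈ Subgroup.normalizer (K : Set G) := H_le_normalizer d hK (P_le_HH d hu)
  have hnotall : ¬ ∀ i, (d.z i * d.y i) * (dd⁻¹ * (d.z i * d.y i)⁻¹ * dd) ∈ K := by
    intro hall
    have hkq := kj_eq_qj_of_wv_mem d hK j e he hall
    obtain ⟨m, hm⟩ := dvd_of_kj_qj d hkq
    apply hg
    rw [normalizer_eq d hK, hgeq, hm, pow_mul]
    exact mul_mem (mul_mem (HH_le_NN d (P_le_HH d hu)) (pow_mem (t_mem_NN d) m))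
      (pow_mem (HH_le_NN d (b_mem_HH d)) e)
  push_neg at hnotall
  obtain ⟨i, hWout⟩ := hnotall
  set w := d.z i * d.y i with hw
  set v := dd⁻¹ * w⁻¹ * dd with hv
  have hwK : w ∈ K := zy_mem_K d hK i
  have hwP : w ∈ d.P := mul_mem (z_mem_P d i) (y_mem_P d i)
  have hvP : v ∈ d.P := by
    have h2 := (P_normal d).conj_mem w⁻¹ (inv_mem hwP) dd⁻¹
    simpa [hv] using h2
  have hvH : v ∈ HH d := P_le_HH d hvP
  have hvK : v ∉ K := fun hvmem => hWout (mul_mem hwK hvmem)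
  have hgv : ∀ s : ℤ, g * v ^ s * g⁻¹ ∈ K := by
    intro s
    have h1 : g * v ^ s * g⁻¹ = u * (dd * v ^ s * dd⁻¹) * u⁻¹ := by
      rw [hgeq, hdd]; group
    have h3 : dd * v ^ s * dd⁻¹ = w ^ (-s) := by
      have h4 := conj_zpow' dd⁻¹ v s
      rw [inv_inv] at h4
      have h5 : dd * v * dd⁻¹ = w⁻¹ := by rw [hv]; group
      rw [h4, h5, inv_zpow, ← zpow_neg]
    rw [h1, h3]
    exact (Subgroup.mem_normalizer_iff.mp hu_norm _).mp (zpow_mem hwK _)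
  have hvconj : ∀ s : ℤ, ∀ κ ∈ K, v ^ s * κ * v ^ (-s) ∈ K := by
    intro s κ hκ
    have h1 : v ^ s * κ * v ^ (-s) = (v ^ (-s))⁻¹ * κ * v ^ (-s) := by group
    rw [h1]
    exact hK.norm _ (zpow_mem hvH _) κ hκ
  set J := K ⊔ Subgroup.closure {v} with hJ
  have hvJ : v ∈ J := Subgroup.mem_sup_right (Subgroup.mem_closure_singleton.mpr ⟨1, zpow_one v⟩)
  have hJelts : ∀ l ∈ J, ∃ κ ∈ K, ∃ s : ℤ, l = κ * v ^ s := by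
    let S : Subgroup G :=
      { carrier := {l | ∃ κ ∈ K, ∃ s : ℤ, l = κ * v ^ s}
        one_mem' := ⟨1, one_mem K, 0, by simp⟩
        mul_mem' := by
          rintro l₁ l₂ ⟨κ₁, h₁, s₁, rfl⟩ ⟨κ₂, h₂, s₂, rfl⟩
          refine ⟨κ₁ * (v ^ s₁ * κ₂ * v ^ (-s₁)), mul_mem h₁ (hvconj s₁ κ₂ h₂), s₁ + s₂, ?_⟩
          group
        inv_mem' := by
          rintro l ⟨κ, hκ, s, rfl⟩
          refine ⟨v ^ (-s) * κ⁻¹ * v ^ s, ?_, -s, ?_⟩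
          · have h2 := hvconj (-s) κ⁻¹ (inv_mem hκ)
            rwa [neg_neg] at h2
          · group }
    intro l hl
    have hle : J ≤ S := by
      rw [hJ]
      apply sup_le
      · intro κ hκ; exact ⟨κ, hκ, 0, by simp⟩
      · rw [Subgroup.closure_le]
        rintro s rfl
        exact ⟨1, one_mem K, 1, by simp⟩
    exact hle hl
  have hJnorm : NormalOver (HH d) K J := by
    refine ⟨sup_le hK.le ?_, lt_of_le_of_ne le_sup_left ?_, ?_⟩
    · rw [Subgroup.closure_le]; rintro s rfl; exact hvH
    · intro hEq
      exact hvK (by rw [hEq]; exact hvJ)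
    · intro h hh l hl
      obtain ⟨κ, hκ, s, rfl⟩ := hJelts l hl
      have hc : (v ^ s)⁻¹ * h⁻¹ * v ^ s * h ∈ K :=
        comm_mem d hK (zpow_mem hvH s) hh
      have hid : h⁻¹ * (κ * v ^ s) * h
          = (h⁻¹ * κ * h) * (v ^ s * ((v ^ s)⁻¹ * h⁻¹ * v ^ s * h)) := by group
      rw [hid]
      exact mul_mem (Subgroup.mem_sup_left (hK.norm h hh κ hκ))
        (mul_mem (zpow_mem hvJ s) (Subgroup.mem_sup_left hc))
  obtain ⟨L, hLmin, hLJ⟩ := exists_minimal_over hJnorm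
  have hKLle : K ≤ L := le_of_lt hLmin.1.2.1
  have hLelts : ∀ l ∈ L, ∃ κ ∈ K, ∃ s : ℤ, l = κ * v ^ s := fun l hl => hJelts l (hLJ hl)
  have hvanish := factor_vanish (g := g) hKLle hLelts hgv
  -- eps structure
  have hne : HH d ≠ K := fun hh => hK.ne hh.symm
  have hepseq : eps (HH d) K
      = (({L' : Subgroup G | MinimalOver (HH d) K L'}.toFinset).toList.map
        fun L' => hat K - hat L').prod := by
    unfold eps
    rw [if_neg hne]
  set lst := ({L' : Subgroup G | MinimalOver (HH d) K L'}.toFinset).toList with hlst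
  have hallmin : ∀ L' ∈ lst, MinimalOver (HH d) K L' := by
    intro L' hL'
    rw [hlst, Finset.mem_toList, Set.mem_toFinset] at hL'
    exact hL'
  have hLmem : L ∈ lst := by
    rw [hlst, Finset.mem_toList, Set.mem_toFinset]
    exact hLmin
  have hpair : (lst.map fun L' => hat K - hat L').Pairwise Commute := by
    apply List.pairwise_of_forall_mem_list
    intro a ha b hb
    rw [List.mem_map] at ha hb
    obtain ⟨L₁, hL₁, rfl⟩ := ha
    obtain ⟨L₂, hL₂, rfl⟩ := hb
    exact eps_factor_commute (hallmin L₁ hL₁).1 (hallmin L₂ hL₂).1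
  have hprodeq : (lst.map fun L' => hat K - hat L').prod
      = (hat K - hat L) * ((lst.erase L).map fun L' => hat K - hat L').prod := by
    have hperm := (List.perm_cons_erase hLmem).map (fun L' => hat K - hat L')
    rw [List.Perm.prod_eq' hperm hpair, List.map_cons, List.prod_cons]
  have hcomm : Commute (hat K - hat L) (((lst.erase L).map fun L' => hat K - hat L').prod) := by
    apply Commute.list_prod_right
    intro x hx
    rw [List.mem_map] at hx
    obtain ⟨L₂, hL₂, rfl⟩ := hx
    exact eps_factor_commute hLmin.1 (hallmin L₂ (List.mem_of_mem_erase hL₂)).1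
  have hKeps : hat K * eps (HH d) K = eps (HH d) K := by
    rw [hepseq, hprodeq, ← mul_assoc]
    congr 1
    rw [mul_sub, hat_idem, hat_mul_hat_of_le hKLle]
  have hepsX : eps (HH d) K * (MonoidAlgebra.of ℚ G g⁻¹ * hat K * MonoidAlgebra.of ℚ G g) = 0 := by
    rw [hepseq, hprodeq, hcomm.eq, mul_assoc, hvanish, mul_zero]
  have key : (MonoidAlgebra.of ℚ G g⁻¹ * hat K * MonoidAlgebra.of ℚ G g) *
      (MonoidAlgebra.of ℚ G g⁻¹ * eps (HH d) K * MonoidAlgebra.of ℚ G g)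
      = MonoidAlgebra.of ℚ G g⁻¹ * eps (HH d) K * MonoidAlgebra.of ℚ G g := by
    have hgg : MonoidAlgebra.of ℚ G g * MonoidAlgebra.of ℚ G g⁻¹ = 1 := by
      rw [← map_mul, mul_inv_cancel, map_one]
    calc (MonoidAlgebra.of ℚ G g⁻¹ * hat K * MonoidAlgebra.of ℚ G g) *
        (MonoidAlgebra.of ℚ G g⁻¹ * eps (HH d) K * MonoidAlgebra.of ℚ G g)
        = MonoidAlgebra.of ℚ G g⁻¹ * hat K *
          ((MonoidAlgebra.of ℚ G g * MonoidAlgebra.of ℚ G g⁻¹) *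
          (eps (HH d) K * MonoidAlgebra.of ℚ G g)) := by simp only [mul_assoc]
      _ = MonoidAlgebra.of ℚ G g⁻¹ * (hat K * eps (HH d) K) * MonoidAlgebra.of ℚ G g := by
          rw [hgg, one_mul]; simp only [mul_assoc]
      _ = MonoidAlgebra.of ℚ G g⁻¹ * eps (HH d) K * MonoidAlgebra.of ℚ G g := by rw [hKeps]
  calc eps (HH d) K * (MonoidAlgebra.of ℚ G g⁻¹ * eps (HH d) K * MonoidAlgebra.of ℚ G g)
      = eps (HH d) K * ((MonoidAlgebra.of ℚ G g⁻¹ * hat K * MonoidAlgebra.of ℚ G g) *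
        (MonoidAlgebra.of ℚ G g⁻¹ * eps (HH d) K * MonoidAlgebra.of ℚ G g)) := by rw [key]
    _ = (eps (HH d) K * (MonoidAlgebra.of ℚ G g⁻¹ * hat K * MonoidAlgebra.of ℚ G g)) *
        (MonoidAlgebra.of ℚ G g⁻¹ * eps (HH d) K * MonoidAlgebra.of ℚ G g) := by
        simp only [mul_assoc]
    _ = 0 := by rw [hepsX, zero_mul]

end S11

end Paper

/-- For `H = ⟨P, b⟩` and `K ⊴ H` with `K ≠ H`, `K ≠ P` and `H/K`
cyclic: `N_G(K) = ⟨P, b, a^{2^{n-2}}⟩` and `(H,K)` is a strong Shoda pair of `G`. -/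
theorem stmt11 {G : Type*} [Group G] [Fintype G] (d : Paper.GData G)
    (H K : Subgroup G) (hH : H = d.P ⊔ Subgroup.closure {d.b})
    (hKH : K ≤ H) (hKnormal : Paper.NormalIn H K) (hKne : K ≠ H) (hKP : K ≠ d.P)
    (hcyc : Paper.CyclicQuot H K) :
    Subgroup.normalizer (K : Set G) = d.P ⊔ Subgroup.closure {d.b} ⊔ Subgroup.closure {d.a ^ 2 ^ (d.n - 2)} ∧
    Paper.IsStrongShodaPair H K := by
  subst hH
  have hK : Paper.S11.KHyp d K := ⟨hKH, hKnormal, hKne, hKP, hcyc⟩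
  constructor
  · exact Paper.S11.normalizer_eq d hK
  · refine ⟨⟨?_, ?_⟩, ⟨hcyc, ?_, ?_⟩, ?_⟩
    · exact Paper.S11.H_le_normalizer d hK
    · exact Paper.S11.normalizer_conj_H d hK
    · intro h₁ hh₁ h₂ hh₂
      exact Paper.S11.comm_mem d hK hh₁ hh₂
    · intro C hKC hCN hab hHC
      exact Paper.S11.max_abelian d hK C hCN hab hHC
    · exact Paper.S11.SS3 d hK
end

section
/- Let G be the group of order p^{2r+1}·2^n described in the context and let K be a subgroup of P with K normal in P and P/K cyclic. If there exists j with 1 ≤ j ≤ 2^{n−1} such that the subgroup generated by x, y₁^{k^j}z₁, …, y_r^{k^j}z_r is contained in K, then (P,K) is not a Shoda pair of G. -/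
open scoped Classical

section Aux12
variable {G : Type*} [Group G]

/-- binomial-type formula in a class-2 situation -/
lemma semicomm_pow_mul' {u v c : G} (h : v * u = u * v * c)
    (hcu : Commute c u) (hcv : Commute c v) (t : ℕ) :
    (u * v) ^ t = u ^ t * v ^ t * c ^ t.choose 2 := by
  have key : ∀ t : ℕ, v ^ t * u = u * v ^ t * c ^ t := by
    intro t
    induction t with
    | zero => simp
    | succ t ih =>
      have h1 : v ^ (t+1) * u = v ^ t * (v * u) := by rw [pow_succ, mul_assoc]
      rw [h1, h, ← mul_assoc, ← mul_assoc, ih]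
      calc u * v ^ t * c ^ t * v * c = u * v ^ t * (c ^ t * v) * c := by group
        _ = u * v ^ t * (v * c ^ t) * c := by rw [(hcv.pow_left t).eq]
        _ = u * v ^ (t+1) * c ^ (t+1) := by rw [pow_succ, pow_succ]; group
  induction t with
  | zero => simp
  | succ t ih =>
    have h2 : (t+1).choose 2 = t + t.choose 2 := by
      show (t+1).choose (1+1) = _
      rw [Nat.choose_succ_succ, Nat.choose_one_right]
    rw [pow_succ, ih]
    calc u ^ t * v ^ t * c ^ t.choose 2 * (u * v)
        = u ^ t * v ^ t * (c ^ t.choose 2 * u) * v := by group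
      _ = u ^ t * v ^ t * (u * c ^ t.choose 2) * v := by rw [(hcu.pow_left (t.choose 2)).eq]
      _ = u ^ t * (v ^ t * u) * (c ^ t.choose 2 * v) := by group
      _ = u ^ t * (v ^ t * u) * (v * c ^ t.choose 2) := by rw [(hcv.pow_left (t.choose 2)).eq]
      _ = u ^ t * (u * v ^ t * c ^ t) * (v * c ^ t.choose 2) := by rw [key t]
      _ = (u ^ t * u) * v ^ t * (c ^ t * v) * c ^ t.choose 2 := by group
      _ = (u ^ t * u) * v ^ t * (v * c ^ t) * c ^ t.choose 2 := by rw [(hcv.pow_left t).eq]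
      _ = u ^ (t+1) * v ^ (t+1) * c ^ ((t+1).choose 2) := by
          rw [h2, pow_add, ← pow_succ, pow_succ v]; group

/-- Heisenberg swap. -/
lemma heis1' {x y z : G} (hxy : Commute x y) (h : z * y = y * z * x⁻¹) (s : ℕ) :
    z * y ^ s = y ^ s * z * (x ^ s)⁻¹ := by
  induction s with
  | zero => simp
  | succ s ih =>
    calc z * y ^ (s+1) = (z * y ^ s) * y := by rw [pow_succ]; group
      _ = y ^ s * z * ((x ^ s)⁻¹ * y) := by rw [ih]; group
      _ = y ^ s * z * (y * (x ^ s)⁻¹) := by rw [((hxy.pow_left s).inv_left.eq)]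
      _ = y ^ s * (z * y) * (x ^ s)⁻¹ := by group
      _ = y ^ s * (y * z * x⁻¹) * (x ^ s)⁻¹ := by rw [h]
      _ = y ^ (s+1) * z * (x ^ (s+1))⁻¹ := by rw [pow_succ, pow_succ]; group

lemma heis2' {x y z : G} (hxy : Commute x y) (hxz : Commute x z)
    (h : z * y = y * z * x⁻¹) (s t : ℕ) :
    z ^ t * y ^ s = y ^ s * z ^ t * (x ^ (s*t))⁻¹ := by
  induction t with
  | zero => simp
  | succ t ih =>
    calc z ^ (t+1) * y ^ s = z ^ t * (z * y ^ s) := by rw [pow_succ]; group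
      _ = z ^ t * (y ^ s * z * (x ^ s)⁻¹) := by rw [heis1' hxy h s]
      _ = (z ^ t * y ^ s) * z * (x ^ s)⁻¹ := by group
      _ = y ^ s * z ^ t * (x ^ (s*t))⁻¹ * z * (x ^ s)⁻¹ := by rw [ih]
      _ = y ^ s * z ^ t * ((x ^ (s*t))⁻¹ * z) * (x ^ s)⁻¹ := by group
      _ = y ^ s * z ^ t * (z * (x ^ (s*t))⁻¹) * (x ^ s)⁻¹ := by
          rw [((hxz.pow_left (s*t)).inv_left.eq)]
      _ = y ^ s * z ^ (t+1) * (x ^ (s*(t+1)))⁻¹ := by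
          rw [pow_succ z, Nat.mul_succ, pow_add]; group

/-- conjugation power formula -/
lemma conj_pow' (w u : G) (e : ℕ) : w⁻¹ * u ^ e * w = (w⁻¹ * u * w) ^ e := by
  induction e with
  | zero => simp
  | succ e ih => rw [pow_succ, pow_succ, ← ih]; group

lemma conj_pow_pow' {a y : G} {k : ℕ} (h : a⁻¹ * y * a = y ^ k) (m : ℕ) :
    (a ^ m)⁻¹ * y * a ^ m = y ^ k ^ m := by
  induction m with
  | zero => simp
  | succ m ih =>
    calc (a ^ (m+1))⁻¹ * y * a ^ (m+1)
        = (a ^ m)⁻¹ * (a⁻¹ * y * a) * a ^ m := by rw [pow_succ']; group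
      _ = (a ^ m)⁻¹ * y ^ k * a ^ m := by rw [h]
      _ = ((a ^ m)⁻¹ * y * a ^ m) ^ k := by rw [conj_pow']
      _ = y ^ k ^ (m+1) := by rw [ih, ← pow_mul, ← pow_succ]

lemma conj_fix' {w h : G} (hwh : w * h = h * w) : w⁻¹ * h * w = h := by
  calc w⁻¹ * h * w = w⁻¹ * (h * w) := by group
    _ = w⁻¹ * (w * h) := by rw [← hwh]
    _ = h := by group

end Aux12

/-- Let `K ⊴ P` with `P/K` cyclic.  If for some `1 ≤ j ≤ 2^{n-1}`
the subgroup `⟨x, y₁^{k^j}z₁, …, y_r^{k^j}z_r⟩` is contained in `K`, then `(P,K)` is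
not a Shoda pair of `G`. -/
theorem stmt12 {G : Type*} [Group G] [Fintype G] (d : Paper.GData G)
    (K : Subgroup G) (hKP : K ≤ d.P) (hKnormal : Paper.NormalIn d.P K)
    (hcyc : Paper.CyclicQuot d.P K)
    (hj : ∃ j, 1 ≤ j ∧ j ≤ 2 ^ (d.n - 1) ∧
      Subgroup.closure (({d.x} : Set G) ∪ Set.range fun i => d.y i ^ d.k ^ j * d.z i) ≤ K) :
    ¬ Paper.IsShodaPair d.P K := by
  rintro ⟨-, -, -, hcore⟩
  obtain ⟨j, -, -, hQK⟩ := hj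
  haveI : Fact d.p.Prime := ⟨d.hp⟩
  have hp2 : 2 < d.p := by
    have h2 := d.hp.two_le
    have h4 := d.hp4
    rcases Nat.lt_or_ge 2 d.p with h | h
    · exact h
    · interval_cases h' : d.p <;> omega
  -- basic commutation facts
  have hxy : ∀ i, d.x * d.y i = d.y i * d.x := by
    intro i
    calc d.x * d.y i = d.y i * d.x * (d.x⁻¹ * (d.y i)⁻¹ * d.x * d.y i) := by group
      _ = d.y i * d.x := by rw [d.hxy i, mul_one]
  have hxz : ∀ i, d.x * d.z i = d.z i * d.x := by
    intro i
    calc d.x * d.z i = d.z i * d.x * (d.x⁻¹ * (d.z i)⁻¹ * d.x * d.z i) := by group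
      _ = d.z i * d.x := by rw [d.hxz i, mul_one]
  have hax : d.a * d.x = d.x * d.a := by
    calc d.a * d.x = d.x * d.a * (d.a⁻¹ * d.x⁻¹ * d.a * d.x) := by group
      _ = d.x * d.a := by rw [d.hax, mul_one]
  -- x commutes with everything in P
  have hxP : ∀ h ∈ d.P, Commute d.x h := by
    intro h hh
    have hh' : h ∈ Subgroup.closure (({d.x} : Set G) ∪ Set.range d.y ∪ Set.range d.z) := hh
    induction hh' using Subgroup.closure_induction with
    | mem u hu =>
      simp only [Set.mem_union, Set.mem_singleton_iff, Set.mem_range] at hu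
      rcases hu with (rfl | ⟨i, rfl⟩) | ⟨i, rfl⟩
      · exact Commute.refl _
      · exact hxy i
      · exact hxz i
    | one => exact Commute.one_right _
    | mul u v hu hv ihu ihv => exact Commute.mul_right (ihu hu) (ihv hv)
    | inv u hu ihu => exact Commute.inv_right (ihu hu)
  set X : Subgroup G := Subgroup.zpowers d.x with hXdef
  have hxX : d.x ∈ X := Subgroup.mem_zpowers d.x
  have hXP : ∀ w ∈ X, ∀ h ∈ d.P, w * h = h * w := by
    intro w hw h hh
    obtain ⟨m, rfl⟩ := hw
    exact ((hxP h hh).zpow_left m).eq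
  have hXconj : ∀ w ∈ X, ∀ h ∈ d.P, h⁻¹ * w * h = w := by
    intro w hw h hh
    exact conj_fix' ((hXP w hw h hh).symm)
  -- commutators of generators lie in X
  have hcommGen : ∀ u, (u ∈ (({d.x} : Set G) ∪ Set.range d.y ∪ Set.range d.z)) →
      ∀ v, (v ∈ (({d.x} : Set G) ∪ Set.range d.y ∪ Set.range d.z)) →
      u⁻¹ * v⁻¹ * u * v ∈ X := by
    have trivcase : ∀ u v : G, u * v = v * u → u⁻¹ * v⁻¹ * u * v ∈ X := by
      intro u v huv
      have : u⁻¹ * v⁻¹ * u * v = u⁻¹ * v⁻¹ * (u * v) := by group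
      rw [this, huv]
      have : u⁻¹ * v⁻¹ * (v * u) = 1 := by group
      rw [this]; exact one_mem X
    intro u hu v hv
    simp only [Set.mem_union, Set.mem_singleton_iff, Set.mem_range] at hu hv
    rcases hu with (rfl | ⟨i, rfl⟩) | ⟨i, rfl⟩ <;>
      rcases hv with (rfl | ⟨i', rfl⟩) | ⟨i', rfl⟩
    · exact trivcase _ _ rfl
    · exact trivcase _ _ (hxy i')
    · exact trivcase _ _ (hxz i')
    · exact trivcase _ _ (hxy i).symm
    · rw [d.hyy i i']; exact one_mem X
    · by_cases hii : i = i'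
      · subst hii
        rw [d.hyz i]; exact hxX
      · rw [d.hyz' i i' hii]; exact one_mem X
    · exact trivcase _ _ (hxz i).symm
    · by_cases hii : i' = i
      · subst hii
        have : (d.z i')⁻¹ * (d.y i')⁻¹ * d.z i' * d.y i'
            = ((d.y i')⁻¹ * (d.z i')⁻¹ * d.y i' * d.z i')⁻¹ := by group
        rw [this, d.hyz i']
        exact inv_mem hxX
      · have : (d.z i)⁻¹ * (d.y i')⁻¹ * d.z i * d.y i'
            = ((d.y i')⁻¹ * (d.z i)⁻¹ * d.y i' * d.z i)⁻¹ := by group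
        rw [this, d.hyz' i' i hii]
        simp only [inv_one]
        exact one_mem X
    · rw [d.hzz i i']; exact one_mem X
  -- all commutators of elements of P lie in X
  have hcomm1 : ∀ u ∈ d.P,
      ∀ v, (v ∈ (({d.x} : Set G) ∪ Set.range d.y ∪ Set.range d.z)) →
      u⁻¹ * v⁻¹ * u * v ∈ X := by
    intro u hu
    have hu' : u ∈ Subgroup.closure (({d.x} : Set G) ∪ Set.range d.y ∪ Set.range d.z) := hu
    induction hu' using Subgroup.closure_induction with
    | mem w hw => exact hcommGen w hw
    | one =>
      intro v hv
      have : (1:G)⁻¹ * v⁻¹ * 1 * v = 1 := by group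
      rw [this]; exact one_mem X
    | mul u₁ u₂ hu₁ hu₂ ih₁ ih₂ =>
      intro v hv
      have hid : (u₁ * u₂)⁻¹ * v⁻¹ * (u₁ * u₂) * v
          = (u₂⁻¹ * (u₁⁻¹ * v⁻¹ * u₁ * v) * u₂) * (u₂⁻¹ * v⁻¹ * u₂ * v) := by group
      rw [hid, hXconj _ (ih₁ hu₁ v hv) u₂ hu₂]
      exact mul_mem (ih₁ hu₁ v hv) (ih₂ hu₂ v hv)
    | inv u₁ hu₁ ih₁ =>
      intro v hv
      have hid : (u₁⁻¹)⁻¹ * v⁻¹ * u₁⁻¹ * v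
          = u₁ * (u₁⁻¹ * v⁻¹ * u₁ * v)⁻¹ * u₁⁻¹ := by group
      rw [hid]
      have := hXconj _ (inv_mem (ih₁ hu₁ v hv)) u₁⁻¹ (inv_mem hu₁)
      simp only [inv_inv] at this
      rw [this]
      exact inv_mem (ih₁ hu₁ v hv)
  have hcomm : ∀ u ∈ d.P, ∀ v ∈ d.P, u⁻¹ * v⁻¹ * u * v ∈ X := by
    intro u hu v hv
    have hv' : v ∈ Subgroup.closure (({d.x} : Set G) ∪ Set.range d.y ∪ Set.range d.z) := hv
    induction hv' using Subgroup.closure_induction with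
    | mem w hw => exact hcomm1 u hu w hw
    | one =>
      have : u⁻¹ * (1:G)⁻¹ * u * 1 = 1 := by group
      rw [this]; exact one_mem X
    | mul v₁ v₂ hv₁ hv₂ ih₁ ih₂ =>
      have hid : u⁻¹ * (v₁ * v₂)⁻¹ * u * (v₁ * v₂)
          = (u⁻¹ * v₂⁻¹ * u * v₂) * (v₂⁻¹ * (u⁻¹ * v₁⁻¹ * u * v₁) * v₂) := by group
      rw [hid, hXconj _ (ih₁ hv₁) v₂ hv₂]
      exact mul_mem (ih₂ hv₂) (ih₁ hv₁)
    | inv v₁ hv₁ ih₁ =>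
      have hid : u⁻¹ * (v₁⁻¹)⁻¹ * u * v₁⁻¹
          = v₁ * (u⁻¹ * v₁⁻¹ * u * v₁)⁻¹ * v₁⁻¹ := by group
      rw [hid]
      have := hXconj _ (inv_mem (ih₁ hv₁)) v₁⁻¹ (inv_mem hv₁)
      simp only [inv_inv] at this
      rw [this]
      exact inv_mem (ih₁ hv₁)
  -- every element of P has order dividing p
  have hXpowp : ∀ w ∈ X, w ^ d.p = 1 := by
    intro w hw
    obtain ⟨m, rfl⟩ := hw
    have : (d.x ^ m) ^ d.p = (d.x ^ d.p) ^ m := by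
      rw [← zpow_natCast (d.x ^ m) d.p, ← zpow_natCast d.x d.p, ← zpow_mul, ← zpow_mul, mul_comm]
    rw [this, d.hxp, one_zpow]
  have hPexp : ∀ h ∈ d.P, h ^ d.p = 1 := by
    intro h hh
    have hh' : h ∈ Subgroup.closure (({d.x} : Set G) ∪ Set.range d.y ∪ Set.range d.z) := hh
    induction hh' using Subgroup.closure_induction with
    | mem w hw =>
      simp only [Set.mem_union, Set.mem_singleton_iff, Set.mem_range] at hw
      rcases hw with (rfl | ⟨i, rfl⟩) | ⟨i, rfl⟩
      · exact d.hxp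
      · exact d.hyp i
      · exact d.hzp i
    | one => exact one_pow _
    | mul u v hu hv ihu ihv =>
      set c : G := v⁻¹ * u⁻¹ * v * u with hcdef
      have hcX : c ∈ X := hcomm v hv u hu
      have hvu : v * u = u * v * c := by rw [hcdef]; group
      have hcu : Commute c u := by
        have := hXP c hcX u hu
        exact this
      have hcv : Commute c v := hXP c hcX v hv
      rw [semicomm_pow_mul' hvu hcu hcv d.p, ihu hu, ihv hv, one_mul, one_mul]
      obtain ⟨w, hw⟩ := d.hp.dvd_choose_self (by norm_num) hp2
      rw [hw, pow_mul, hXpowp c hcX, one_pow]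
    | inv u hu ihu => rw [inv_pow, ihu hu, inv_one]
  -- conjugation action facts
  have hayc : ∀ i, d.a⁻¹ * d.y i * d.a = d.y i ^ d.k := by
    intro i
    have e1 : d.a⁻¹ * (d.y i)⁻¹ * d.a = d.y i ^ (1 - (d.k:ℤ)) * (d.y i)⁻¹ := by
      calc d.a⁻¹ * (d.y i)⁻¹ * d.a
          = (d.a⁻¹ * (d.y i)⁻¹ * d.a * d.y i) * (d.y i)⁻¹ := by group
        _ = d.y i ^ (1 - (d.k:ℤ)) * (d.y i)⁻¹ := by rw [d.hay i]
    calc d.a⁻¹ * d.y i * d.a = (d.a⁻¹ * (d.y i)⁻¹ * d.a)⁻¹ := by group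
      _ = (d.y i ^ (1 - (d.k:ℤ)) * (d.y i)⁻¹)⁻¹ := by rw [e1]
      _ = d.y i ^ ((d.k:ℤ)) := by group
      _ = d.y i ^ d.k := by rw [zpow_natCast]
  have hazc : ∀ i, d.a⁻¹ * d.z i * d.a = d.z i ^ d.q := by
    intro i
    have e1 : d.a⁻¹ * (d.z i)⁻¹ * d.a = d.z i ^ (1 - (d.q:ℤ)) * (d.z i)⁻¹ := by
      calc d.a⁻¹ * (d.z i)⁻¹ * d.a
          = (d.a⁻¹ * (d.z i)⁻¹ * d.a * d.z i) * (d.z i)⁻¹ := by group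
        _ = d.z i ^ (1 - (d.q:ℤ)) * (d.z i)⁻¹ := by rw [d.haz i]
    calc d.a⁻¹ * d.z i * d.a = (d.a⁻¹ * (d.z i)⁻¹ * d.a)⁻¹ := by group
      _ = (d.z i ^ (1 - (d.q:ℤ)) * (d.z i)⁻¹)⁻¹ := by rw [e1]
      _ = d.z i ^ ((d.q:ℤ)) := by group
      _ = d.z i ^ d.q := by rw [zpow_natCast]
  have hbyc : ∀ i, d.b⁻¹ * (d.y i)⁻¹ * d.b = d.z i := by
    intro i
    calc d.b⁻¹ * (d.y i)⁻¹ * d.b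
        = (d.b⁻¹ * (d.y i)⁻¹ * d.b * d.y i) * (d.y i)⁻¹ := by group
      _ = (d.z i * d.y i) * (d.y i)⁻¹ := by rw [d.hby i]
      _ = d.z i := by group
  have hbzc : ∀ i, d.b⁻¹ * (d.z i)⁻¹ * d.b = d.y i := by
    intro i
    calc d.b⁻¹ * (d.z i)⁻¹ * d.b
        = (d.b⁻¹ * (d.z i)⁻¹ * d.b * d.z i) * (d.z i)⁻¹ := by group
      _ = (d.y i * d.z i) * (d.z i)⁻¹ := by rw [d.hbz i]
      _ = d.y i := by group
  have hbxinv : d.b⁻¹ * d.x⁻¹ * d.b = d.x := by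
    calc d.b⁻¹ * d.x⁻¹ * d.b
        = (d.b⁻¹ * d.x⁻¹ * d.b * d.x) * d.x⁻¹ := by group
      _ = d.x ^ 2 * d.x⁻¹ := by rw [d.hbx]
      _ = d.x := by group
  have hbac : d.b⁻¹ * d.a * d.b = d.a⁻¹ := by
    have e1 : d.b⁻¹ * d.a⁻¹ * d.b = d.a := by
      calc d.b⁻¹ * d.a⁻¹ * d.b
          = (d.b⁻¹ * d.a⁻¹ * d.b * d.a) * d.a⁻¹ := by group
        _ = d.a ^ 2 * d.a⁻¹ := by rw [d.hba]
        _ = d.a := by group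
    calc d.b⁻¹ * d.a * d.b = (d.b⁻¹ * d.a⁻¹ * d.b)⁻¹ := by group
      _ = d.a⁻¹ := by rw [e1]
  -- the subgroup Q
  set Q : Subgroup G :=
    Subgroup.closure (({d.x} : Set G) ∪ Set.range fun i => d.y i ^ d.k ^ j * d.z i) with hQdef
  have hxQ : d.x ∈ Q := Subgroup.subset_closure (Or.inl rfl)
  have hwQ : ∀ i, d.y i ^ d.k ^ j * d.z i ∈ Q := fun i =>
    Subgroup.subset_closure (Or.inr ⟨i, rfl⟩)
  -- arithmetic facts
  have hkq1 : 1 ≤ d.k * d.q := by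
    by_contra hcon
    have h0 : d.k * d.q = 0 := by omega
    have : ((d.k * d.q : ℕ) : ZMod d.p) = 1 := by push_cast; exact d.hkq
    rw [h0] at this
    simp at this
  have hstpos : 1 ≤ (d.k * d.q) ^ j := Nat.one_le_pow _ _ hkq1
  have hstdvd : d.p ∣ (d.k * d.q) ^ j - 1 := by
    have h1 : (((d.k * d.q) ^ j : ℕ) : ZMod d.p) = ((1 : ℕ) : ZMod d.p) := by
      push_cast
      rw [d.hkq, one_pow]
    have h2 := (ZMod.natCast_eq_natCast_iff _ _ _).mp h1
    exact (Nat.modEq_iff_dvd' hstpos).mp h2.symm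
  -- key membership: z i ^ (q^j) * y i ∈ Q
  have hzyQ : ∀ i, d.z i ^ d.q ^ j * d.y i ∈ Q := by
    intro i
    set s := d.k ^ j with hsdef
    set t := d.q ^ j with htdef
    have hst : s * t = (d.k * d.q) ^ j := by rw [hsdef, htdef, mul_pow]
    have hswap : d.z i * d.y i = d.y i * d.z i * d.x⁻¹ := by
      have hyzx : d.y i * d.z i = d.z i * d.y i * d.x := by
        calc d.y i * d.z i
            = d.z i * d.y i * ((d.y i)⁻¹ * (d.z i)⁻¹ * d.y i * d.z i) := by group
          _ = d.z i * d.y i * d.x := by rw [d.hyz i]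
      rw [hyzx]; group
    have hcy : Commute d.x (d.y i) := hxy i
    have hcz : Commute d.x (d.z i) := hxz i
    have hyst : d.y i ^ (s * t) = d.y i := by
      obtain ⟨c, hc⟩ := hstdvd
      have h1 : s * t = d.p * c + 1 := by omega
      rw [h1, pow_add, pow_mul, d.hyp i, one_pow, one_mul, pow_one]
    have hwt : (d.y i ^ s * d.z i) ^ t
        = (d.y i ^ s) ^ t * d.z i ^ t * ((d.x ^ s)⁻¹) ^ t.choose 2 :=
      semicomm_pow_mul' (heis1' hcy hswap s)
        ((hcy.pow_pow s s).inv_left) ((hcz.pow_left s).inv_left) t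
    have hyzt : d.y i * d.z i ^ t = (d.y i ^ s * d.z i) ^ t * (d.x ^ s) ^ t.choose 2 := by
      rw [hwt, ← pow_mul, hyst, inv_pow]
      group
    have heq : d.z i ^ t * d.y i
        = (d.y i ^ s * d.z i) ^ t * (d.x ^ s) ^ t.choose 2 * (d.x ^ t)⁻¹ := by
      calc d.z i ^ t * d.y i = d.z i ^ t * d.y i ^ 1 := by rw [pow_one]
        _ = d.y i ^ 1 * d.z i ^ t * (d.x ^ (1 * t))⁻¹ := heis2' hcy hcz hswap 1 t
        _ = (d.y i * d.z i ^ t) * (d.x ^ t)⁻¹ := by rw [pow_one, one_mul]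
        _ = (d.y i ^ s * d.z i) ^ t * (d.x ^ s) ^ t.choose 2 * (d.x ^ t)⁻¹ := by rw [hyzt]
    rw [heq]
    exact mul_mem (mul_mem (pow_mem (hwQ i) t) (pow_mem (pow_mem hxQ s) _))
      (inv_mem (pow_mem hxQ t))
  -- the element g = b * a^j
  set g : G := d.b * d.a ^ j with hgdef
  have haxc : Commute (d.a ^ j) d.x := (Commute.pow_left hax j)
  have haxj : (d.a ^ j)⁻¹ * d.x * d.a ^ j = d.x := conj_fix' haxc.eq
  -- commutators of generators with g
  have hgx : g⁻¹ * d.x⁻¹ * g * d.x = d.x * d.x := by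
    have e1 : g⁻¹ * d.x⁻¹ * g * d.x
        = (d.a ^ j)⁻¹ * (d.b⁻¹ * d.x⁻¹ * d.b) * d.a ^ j * d.x := by
      rw [hgdef]; group
    rw [e1, hbxinv, haxj]
  have hgy : ∀ i, g⁻¹ * (d.y i)⁻¹ * g * d.y i = d.z i ^ d.q ^ j * d.y i := by
    intro i
    have e1 : g⁻¹ * (d.y i)⁻¹ * g * d.y i
        = (d.a ^ j)⁻¹ * (d.b⁻¹ * (d.y i)⁻¹ * d.b) * d.a ^ j * d.y i := by
      rw [hgdef]; group
    rw [e1, hbyc, conj_pow_pow' (hazc i) j]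
  have hgz : ∀ i, g⁻¹ * (d.z i)⁻¹ * g * d.z i = d.y i ^ d.k ^ j * d.z i := by
    intro i
    have e1 : g⁻¹ * (d.z i)⁻¹ * g * d.z i
        = (d.a ^ j)⁻¹ * (d.b⁻¹ * (d.z i)⁻¹ * d.b) * d.a ^ j * d.z i := by
      rw [hgdef]; group
    rw [e1, hbzc, conj_pow_pow' (hayc i) j]
  -- the commutator subgroup [P, g] is contained in K
  have hsub : Paper.commSub d.P g ≤ K := by
    rw [Paper.commSub]
    rw [Subgroup.closure_le]
    rintro c ⟨h, hh, rfl⟩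
    have hh' : h ∈ Subgroup.closure (({d.x} : Set G) ∪ Set.range d.y ∪ Set.range d.z) := hh
    induction hh' using Subgroup.closure_induction with
    | mem w hw =>
      simp only [Set.mem_union, Set.mem_singleton_iff, Set.mem_range] at hw
      rcases hw with (rfl | ⟨i, rfl⟩) | ⟨i, rfl⟩
      · rw [hgx]; exact hQK (mul_mem hxQ hxQ)
      · rw [hgy i]; exact hQK (hzyQ i)
      · rw [hgz i]; exact hQK (hwQ i)
    | one =>
      have : g⁻¹ * (1:G)⁻¹ * g * 1 = 1 := by group
      rw [this]; exact one_mem K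
    | mul h₁ h₂ hh₁ hh₂ ih₁ ih₂ =>
      have hid : g⁻¹ * (h₁ * h₂)⁻¹ * g * (h₁ * h₂)
          = (g⁻¹ * h₂⁻¹ * g * h₂) * (h₂⁻¹ * (g⁻¹ * h₁⁻¹ * g * h₁) * h₂) := by group
      rw [hid]
      exact mul_mem (ih₂ hh₂) (hKnormal h₂ hh₂ _ (ih₁ hh₁))
    | inv h₁ hh₁ ih₁ =>
      have hid : g⁻¹ * (h₁⁻¹)⁻¹ * g * h₁⁻¹
          = (h₁⁻¹)⁻¹ * (g⁻¹ * h₁⁻¹ * g * h₁)⁻¹ * h₁⁻¹ := by group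
      rw [hid]
      exact hKnormal h₁⁻¹ (inv_mem hh₁) _ (inv_mem (ih₁ hh₁))
  have hgP : g ∈ d.P := hcore g (le_trans inf_le_left hsub)
  -- g has order dividing 2 and dividing p, so g = 1
  have hgp : g ^ d.p = 1 := hPexp g hgP
  have hbb : d.b⁻¹ = d.b := by
    have : d.b * d.b = 1 := by rw [← pow_two]; exact d.hb2
    exact inv_eq_of_mul_eq_one_right this
  have hconjab : d.b⁻¹ * d.a ^ j * d.b = (d.a ^ j)⁻¹ := by
    rw [conj_pow', hbac, inv_pow]
  have hg2 : g ^ 2 = 1 := by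
    have e1 : g ^ 2 = d.b ^ 2 * ((d.b⁻¹ * d.a ^ j * d.b) * d.a ^ j) := by
      rw [hgdef]; simp only [pow_two]; group
    rw [e1, hconjab, d.hb2, inv_mul_cancel, mul_one]
  have hg1 : g = 1 := by
    obtain ⟨c, hc⟩ : ∃ c, d.p = 2 * c + 1 := by
      have := d.hp4
      exact ⟨d.p / 2, by omega⟩
    calc g = (g ^ 2) ^ c * g := by rw [hg2, one_pow, one_mul]
      _ = g ^ (2 * c + 1) := by rw [← pow_mul, ← pow_succ]
      _ = 1 := by rw [← hc, hgp]
  have hbeq : d.b = (d.a ^ j)⁻¹ := by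
    have : d.b * d.a ^ j = 1 := by rw [← hgdef, hg1]
    exact eq_inv_of_mul_eq_one_left this
  have habc : d.a * d.b = d.b * d.a := by
    rw [hbeq]
    exact (((Commute.refl d.a).pow_right j).inv_right).eq
  have ha2 : d.a ^ 2 = 1 := by
    have h1 : d.b⁻¹ * d.a * d.b = d.a := conj_fix' habc.symm
    have h2 : d.a⁻¹ = d.a := by rw [← hbac, h1]
    calc d.a ^ 2 = d.a * d.a := by rw [pow_two]
      _ = d.a⁻¹ * d.a := by rw [h2]
      _ = 1 := inv_mul_cancel d.a
  -- k² ≢ 1 and q² ≢ 1 mod p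
  have hord4 : 4 ≤ 2 ^ (d.n - 1) := by
    have h3 := d.hn
    calc 4 = 2 ^ 2 := by norm_num
      _ ≤ 2 ^ (d.n - 1) := Nat.pow_le_pow_right (by norm_num) (by omega)
  have hk2 : ((d.k : ZMod d.p)) ^ 2 ≠ 1 := by
    intro h
    have hdvd := orderOf_dvd_of_pow_eq_one h
    rw [d.hordk] at hdvd
    have := Nat.le_of_dvd (by norm_num) hdvd
    omega
  have hq2 : ((d.q : ZMod d.p)) ^ 2 ≠ 1 := by
    intro h
    apply hk2
    have h1 : ((d.k : ZMod d.p) * (d.q : ZMod d.p)) ^ 2 = 1 := by rw [d.hkq, one_pow]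
    rw [mul_pow, h, mul_one] at h1
    exact h1
  -- consequences : all generators trivial
  have hcsq : ∀ (u : G) (e : ℕ), u ^ d.p = 1 → d.a⁻¹ * u * d.a = u ^ e →
      ((e : ZMod d.p)) ^ 2 ≠ 1 → u = 1 := by
    intro u e hup hconj he2
    rcases Nat.eq_zero_or_pos e with h0 | he1
    · rw [h0, pow_zero] at hconj
      calc u = d.a * (d.a⁻¹ * u * d.a) * d.a⁻¹ := by group
        _ = 1 := by rw [hconj]; group
    have h1 : (d.a ^ 2)⁻¹ * u * d.a ^ 2 = u ^ e ^ 2 := conj_pow_pow' hconj 2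
    rw [ha2] at h1
    simp only [inv_one, one_mul, mul_one] at h1
    have h2 : u ^ (e ^ 2 - 1) = 1 := by
      have h3 : u ^ (e ^ 2 - 1) * u = u ^ (e ^ 2) := by
        rw [← pow_succ]
        congr 1
        have : 1 ≤ e ^ 2 := Nat.one_le_pow _ _ (by omega)
        omega
      rw [← h1] at h3
      exact mul_right_cancel (by rw [h3, one_mul])
    have hdvd1 : orderOf u ∣ d.p := orderOf_dvd_of_pow_eq_one hup
    have hdvd2 : orderOf u ∣ e ^ 2 - 1 := orderOf_dvd_of_pow_eq_one h2
    rcases (Nat.Prime.eq_one_or_self_of_dvd d.hp _ hdvd1) with ho | ho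
    · exact orderOf_eq_one_iff.mp ho
    · exfalso
      apply he2
      rw [ho] at hdvd2
      have h4 : ((e ^ 2 - 1 : ℕ) : ZMod d.p) = 0 := (ZMod.natCast_eq_zero_iff _ _).mpr hdvd2
      have h5 : 1 ≤ e ^ 2 := Nat.one_le_pow _ _ (by omega)
      have h6 : (e ^ 2 : ℕ) = (e ^ 2 - 1) + 1 := by omega
      have h7 : ((e ^ 2 : ℕ) : ZMod d.p) = 1 := by
        rw [h6, Nat.cast_add, h4, zero_add, Nat.cast_one]
      push_cast at h7
      exact h7
  have hy1 : ∀ i, d.y i = 1 := fun i => hcsq (d.y i) d.k (d.hyp i) (hayc i) hk2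
  have hz1 : ∀ i, d.z i = 1 := fun i => hcsq (d.z i) d.q (d.hzp i) (hazc i) hq2
  have hx1 : d.x = 1 := by
    have i0 : Fin d.r := ⟨0, d.hr⟩
    rw [← d.hyz i0, hy1 i0, hz1 i0]
    group
  -- G is generated by a alone, contradiction with its order
  have htop : (⊤ : Subgroup G) ≤ Subgroup.zpowers d.a := by
    rw [← d.hgen]
    rw [Subgroup.closure_le]
    rintro u hu
    simp only [Set.mem_union, Set.mem_insert_iff, Set.mem_singleton_iff, Set.mem_range] at hu
    rcases hu with ((rfl | rfl | rfl) | ⟨i, rfl⟩) | ⟨i, rfl⟩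
    · rw [hx1]; exact one_mem _
    · exact Subgroup.mem_zpowers d.a
    · rw [hbeq]; exact inv_mem (pow_mem (Subgroup.mem_zpowers d.a) j)
    · rw [hy1 i]; exact one_mem _
    · rw [hz1 i]; exact one_mem _
  have hzptop : Subgroup.zpowers d.a = ⊤ := le_antisymm le_top htop
  have hcardG : orderOf d.a = Nat.card G := by
    rw [← Nat.card_zpowers, hzptop]
    exact Subgroup.card_top
  have hadvd : orderOf d.a ∣ 2 := orderOf_dvd_of_pow_eq_one ha2
  have hpdvd : d.p ∣ Nat.card G := by
    rw [Nat.card_eq_fintype_card, d.hcard]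
    exact dvd_mul_of_dvd_left (dvd_pow_self d.p (by omega)) _
  rw [← hcardG] at hpdvd
  have : d.p ∣ 2 := hpdvd.trans hadvd
  have := Nat.le_of_dvd (by norm_num) this
  have := d.hp.two_le
  have := d.hp4
  interval_cases h : d.p <;> omega
end
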